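/- arXiv:2105.00073 — 4 statements merged into one kernel-verified Lean document; each statement's English description precedes it below -/
import Mathlib

section
/- Let ν be a Lévy measure on ℝ^d with density bounded by C/|z|^{d+σ} for |z| < 1 and σ ∈ (0,2), let r ∈ (0,1), let σ_r be a d×d matrix with σ_r σ_r^T = (1/2)∫_{|z|<r} z z^T dν(z), and let φ ∈ C_b³(ℝ^d). Then |∫_{|z|<r} (φ(x+z) − φ(x) − Dφ(x)·z) dν(z) − tr(σ_r^T D²φ(x) σ_r)| ≤ K r^{3-σ} ‖D³φ‖_∞ for all x ∈ ℝ^d, with K independent of r, x, φ. -/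
set_option maxHeartbeats 2000000

open MeasureTheory Metric Set Matrix

section AuxTaylor
variable {E : Type*} [NormedAddCommGroup E] [NormedSpace ℝ E]

lemma stmt2_taylor2_bound (φ : E → ℝ) (hφ : ContDiff ℝ 3 φ) (M3 : ℝ)
    (hM3 : ∀ y, ‖iteratedFDeriv ℝ 3 φ y‖ ≤ M3) (x z : E) :
    |φ (x + z) - φ x - fderiv ℝ φ x z - (1/2) * fderiv ℝ (fderiv ℝ φ) x z z|
      ≤ M3 / 2 * ‖z‖ ^ 3 := by
  have hφ1 : Differentiable ℝ φ := hφ.differentiable (by norm_num)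
  have hφ' : ContDiff ℝ 2 (fderiv ℝ φ) := hφ.fderiv_right (by norm_num)
  have hφ'1 : Differentiable ℝ (fderiv ℝ φ) := hφ'.differentiable (by norm_num)
  have hφ'' : ContDiff ℝ 1 (fderiv ℝ (fderiv ℝ φ)) := hφ'.fderiv_right (by norm_num)
  have hφ''1 : Differentiable ℝ (fderiv ℝ (fderiv ℝ φ)) := hφ''.differentiable (by norm_num)
  set f₂ : E → E →L[ℝ] E →L[ℝ] ℝ := fderiv ℝ (fderiv ℝ φ) with hf₂
  have hM3' : 0 ≤ M3 := le_trans (norm_nonneg _) (hM3 x)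
  set c : ℝ := M3 * ‖z‖ ^ 3 with hcdef
  have hc0 : 0 ≤ c := by positivity
  have hLip : ∀ y₁ y₂ : E, ‖f₂ y₁ - f₂ y₂‖ ≤ M3 * ‖y₁ - y₂‖ := by
    intro y₁ y₂
    refine Convex.norm_image_sub_le_of_norm_fderiv_le (𝕜 := ℝ) (f := f₂) (fun y _ => hφ''1 y)
      (fun y _ => ?_) convex_univ (mem_univ y₂) (mem_univ y₁)
    refine (norm_iteratedFDeriv_zero.symm.trans norm_iteratedFDeriv_fderiv).trans_le ?_
    calc ‖iteratedFDeriv ℝ 1 f₂ y‖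
      _ = ‖iteratedFDeriv ℝ 2 (fderiv ℝ φ) y‖ := by rw [hf₂]; exact norm_iteratedFDeriv_fderiv
      _ = ‖iteratedFDeriv ℝ 3 φ y‖ := norm_iteratedFDeriv_fderiv
      _ ≤ M3 := hM3 y
  have hcv : ∀ t : ℝ, HasDerivAt (fun t : ℝ => x + t • z) z t := by
    intro t
    simpa using ((hasDerivAt_id t).smul_const z).const_add x
  have h1 : ∀ t : ℝ, HasDerivAt (fun t : ℝ => φ (x + t • z)) (fderiv ℝ φ (x + t • z) z) t :=
    fun t => ((hφ1 (x + t • z)).hasFDerivAt).comp_hasDerivAt t (hcv t)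
  have h2 : ∀ t : ℝ, HasDerivAt (fun t : ℝ => fderiv ℝ φ (x + t • z) z)
      (f₂ (x + t • z) z z) t := by
    intro t
    have hu : HasDerivAt (fun t : ℝ => fderiv ℝ φ (x + t • z)) (f₂ (x + t • z) z) t :=
      ((hφ'1 (x + t • z)).hasFDerivAt).comp_hasDerivAt t (hcv t)
    simpa using hu.clm_apply (hasDerivAt_const t z)
  set G : ℝ → ℝ := fun t => fderiv ℝ φ (x + t • z) z - fderiv ℝ φ x z - t * (f₂ x z z) with hG
  have hG' : ∀ t : ℝ, HasDerivAt G (f₂ (x + t • z) z z - f₂ x z z) t := by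
    intro t
    have := ((h2 t).sub (hasDerivAt_const t (fderiv ℝ φ x z))).sub
      ((hasDerivAt_id t).mul_const (f₂ x z z))
    refine this.congr_deriv ?_
    simp
  have hGkey : ∀ s ∈ Icc (0:ℝ) 1, ‖G s‖ ≤ c * s ^ 2 / 2 := by
    refine image_norm_le_of_norm_deriv_right_le_deriv_boundary
      (B := fun s => c * s ^ 2 / 2) (B' := fun s => c * s)
      (fun s _ => (hG' s).continuousAt.continuousWithinAt)
      (fun s _ => (hG' s).hasDerivWithinAt) (by simp [hG]) (fun s => ?_) ?_
    · have := ((hasDerivAt_pow 2 s).const_mul c).div_const 2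
      refine this.congr_deriv ?_
      push_cast
      ring
    · intro s hs
      have hsub : f₂ (x + s • z) z z - f₂ x z z = ((f₂ (x + s • z) - f₂ x) z) z := by simp
      rw [Real.norm_eq_abs, hsub]
      have b1 : |((f₂ (x + s • z) - f₂ x) z) z| ≤ ‖f₂ (x + s • z) - f₂ x‖ * ‖z‖ * ‖z‖ :=
        calc |((f₂ (x + s • z) - f₂ x) z) z| ≤ ‖(f₂ (x + s • z) - f₂ x) z‖ * ‖z‖ :=
              (((f₂ (x + s • z) - f₂ x)) z).le_opNorm z
          _ ≤ ‖f₂ (x + s • z) - f₂ x‖ * ‖z‖ * ‖z‖ := by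
              gcongr
              exact (f₂ (x + s • z) - f₂ x).le_opNorm z
      have b2 : ‖f₂ (x + s • z) - f₂ x‖ ≤ M3 * (s * ‖z‖) := by
        have := hLip (x + s • z) x
        simpa [norm_smul, abs_of_nonneg hs.1] using this
      calc |((f₂ (x + s • z) - f₂ x) z) z| ≤ M3 * (s * ‖z‖) * ‖z‖ * ‖z‖ := by
            refine b1.trans ?_
            gcongr
        _ = c * s := by rw [hcdef]; ring
  set F : ℝ → ℝ := fun t => φ (x + t • z) - φ x - t * (fderiv ℝ φ x z)
      - t ^ 2 / 2 * (f₂ x z z) with hF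
  have hF' : ∀ t : ℝ, HasDerivAt F (G t) t := by
    intro t
    have := (((h1 t).sub (hasDerivAt_const t (φ x))).sub
      ((hasDerivAt_id t).mul_const (fderiv ℝ φ x z))).sub
      (((hasDerivAt_pow 2 t).div_const 2).mul_const (f₂ x z z))
    refine this.congr_deriv ?_
    simp [hG]
    try ring
  have key : ∀ s ∈ Icc (0:ℝ) 1, ‖F s‖ ≤ c * s ^ 3 / 2 := by
    refine image_norm_le_of_norm_deriv_right_le_deriv_boundary
      (B := fun s => c * s ^ 3 / 2) (B' := fun s => 3 * c * s ^ 2 / 2)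
      (fun s _ => (hF' s).continuousAt.continuousWithinAt)
      (fun s _ => (hF' s).hasDerivWithinAt) (by simp [hF]) (fun s => ?_) ?_
    · have := ((hasDerivAt_pow 3 s).const_mul c).div_const 2
      refine this.congr_deriv ?_
      push_cast
      ring
    · intro s hs
      refine (hGkey s ⟨hs.1, hs.2.le⟩).trans ?_
      nlinarith [sq_nonneg s, hc0, mul_nonneg hc0 (sq_nonneg s)]
  have hkey1 := key 1 (by norm_num)
  rw [Real.norm_eq_abs] at hkey1
  have e : F 1 = φ (x + z) - φ x - fderiv ℝ φ x z - (1/2) * fderiv ℝ (fderiv ℝ φ) x z z := by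
    simp [hF]
    try ring
  rw [e] at hkey1
  calc |φ (x + z) - φ x - fderiv ℝ φ x z - (1/2) * fderiv ℝ (fderiv ℝ φ) x z z|
      ≤ c * 1 ^ 3 / 2 := hkey1
    _ = M3 / 2 * ‖z‖ ^ 3 := by rw [hcdef]; ring

end AuxTaylor

lemma stmt2_nu_cube_bound (d : ℕ) (ν : Measure (EuclideanSpace ℝ (Fin d)))
    (C σ : ℝ) (hC : 0 < C) (hσ1 : 0 < σ) (hσ2 : σ < 2)
    (hdens : ∀ A : Set (EuclideanSpace ℝ (Fin d)), MeasurableSet A → A ⊆ ball 0 1 →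
      ν A ≤ ∫⁻ z in A, ENNReal.ofReal (C / ‖z‖ ^ ((d : ℝ) + σ)) ∂volume)
    {r : ℝ} (hr : r ∈ Ioo (0:ℝ) 1) :
    ∫⁻ z in ball (0 : EuclideanSpace ℝ (Fin d)) r, ENNReal.ofReal (‖z‖ ^ 3) ∂ν
      ≤ ENNReal.ofReal (C * 2 ^ ((d : ℝ) + σ) * r ^ (3 - σ)) *
        ((1 - ENNReal.ofReal ((2:ℝ)⁻¹ ^ (3 - σ)))⁻¹ *
          volume (ball (0 : EuclideanSpace ℝ (Fin d)) 1)) := by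
  obtain ⟨hr0, hr1⟩ := hr
  set q : ℝ := 2⁻¹ with hqdef
  have hq0 : (0:ℝ) < q := by norm_num
  have hq1 : q < 1 := by norm_num
  set p : ℝ := (d : ℝ) + σ with hpdef
  set ρ : ℝ := q ^ (3 - σ) with hρdef
  have hρ0 : 0 ≤ ρ := Real.rpow_nonneg hq0.le _
  have h3σ : (0:ℝ) < 3 - σ := by linarith
  rcases Nat.eq_zero_or_pos d with hd | hd
  · subst hd
    haveI : Subsingleton (EuclideanSpace ℝ (Fin 0)) := by
      constructor; intro a b
      ext i; exact absurd i.2 (by simp)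
    have hz3 : ∀ z : EuclideanSpace ℝ (Fin 0), ENNReal.ofReal (‖z‖ ^ 3) = 0 := by
      intro z
      have : z = 0 := Subsingleton.elim _ _
      simp [this]
    calc ∫⁻ z in ball (0 : EuclideanSpace ℝ (Fin 0)) r, ENNReal.ofReal (‖z‖ ^ 3) ∂ν
        = 0 := by simp [hz3]
      _ ≤ _ := zero_le
  haveI : Nontrivial (EuclideanSpace ℝ (Fin d)) := by
    refine ⟨⟨0, EuclideanSpace.single ⟨0, hd⟩ 1, fun h => ?_⟩⟩
    have := congrArg (fun v : EuclideanSpace ℝ (Fin d) => v ⟨0, hd⟩) h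
    simp [EuclideanSpace.single_apply] at this
  set V : ENNReal := volume (ball (0 : EuclideanSpace ℝ (Fin d)) 1) with hVdef
  set s : ℕ → Set (EuclideanSpace ℝ (Fin d)) :=
    fun k => ball 0 (r * q ^ k) \ ball 0 (r * q ^ (k+1)) with hsdef
  have hsm : ∀ k, MeasurableSet (s k) := fun k => measurableSet_ball.diff measurableSet_ball
  have hcover : ball (0 : EuclideanSpace ℝ (Fin d)) r ⊆ {0} ∪ ⋃ k, s k := by
    intro z hz
    rw [mem_ball_zero_iff] at hz
    by_cases hz0 : z = 0
    · exact Or.inl (by simp [hz0])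
    · right
      have hz0' : 0 < ‖z‖ := norm_pos_iff.mpr hz0
      have hex : ∃ k : ℕ, r * q ^ (k+1) ≤ ‖z‖ := by
        obtain ⟨n, hn⟩ := exists_pow_lt_of_lt_one (div_pos hz0' hr0) hq1
        refine ⟨n, ?_⟩
        have h1 : q ^ (n+1) ≤ q ^ n := pow_le_pow_of_le_one hq0.le hq1.le (by omega)
        have h2 : r * q ^ n < ‖z‖ := by
          rw [mul_comm, ← lt_div_iff₀ hr0]
          exact hn
        nlinarith [pow_pos hq0 n, pow_pos hq0 (n+1)]
      set k := Nat.find hex with hk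
      have hk1 : r * q ^ (k+1) ≤ ‖z‖ := Nat.find_spec hex
      have hk2 : ‖z‖ < r * q ^ k := by
        rcases Nat.eq_zero_or_pos k with h0 | h0
        · rw [h0]; simpa using hz
        · have hmin := Nat.find_min hex (show k - 1 < k by omega)
          push_neg at hmin
          have : ‖z‖ < r * q ^ (k - 1 + 1) := hmin
          rwa [Nat.sub_add_cancel h0] at this
      refine mem_iUnion.mpr ⟨k, ?_, ?_⟩
      · rwa [mem_ball_zero_iff]
      · rw [mem_ball_zero_iff]; push_neg; exact hk1
  have main : ∫⁻ z in ball (0 : EuclideanSpace ℝ (Fin d)) r, ENNReal.ofReal (‖z‖ ^ 3) ∂ν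
      ≤ ∑' k, ∫⁻ z in s k, ENNReal.ofReal (‖z‖ ^ 3) ∂ν := by
    calc ∫⁻ z in ball (0 : EuclideanSpace ℝ (Fin d)) r, ENNReal.ofReal (‖z‖ ^ 3) ∂ν
        ≤ ∫⁻ z in ({0} ∪ ⋃ k, s k : Set (EuclideanSpace ℝ (Fin d))),
            ENNReal.ofReal (‖z‖ ^ 3) ∂ν := lintegral_mono_set hcover
      _ ≤ (∫⁻ z in ({0} : Set (EuclideanSpace ℝ (Fin d))), ENNReal.ofReal (‖z‖ ^ 3) ∂ν)
          + ∫⁻ z in (⋃ k, s k), ENNReal.ofReal (‖z‖ ^ 3) ∂ν := lintegral_union_le _ _ _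
      _ = ∫⁻ z in (⋃ k, s k), ENNReal.ofReal (‖z‖ ^ 3) ∂ν := by
          rw [lintegral_singleton]
          simp
      _ ≤ ∑' k, ∫⁻ z in s k, ENNReal.ofReal (‖z‖ ^ 3) ∂ν := lintegral_iUnion_le _ _
  have hterm : ∀ k : ℕ, ∫⁻ z in s k, ENNReal.ofReal (‖z‖ ^ 3) ∂ν
      ≤ ENNReal.ofReal (C * 2 ^ p * r ^ (3 - σ) * ρ ^ k) * V := by
    intro k
    set u : ℝ := r * q ^ k with hudef
    have hu0 : 0 < u := by positivity
    have huq0 : 0 < u * q := by positivity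
    have step1 : ∫⁻ z in s k, ENNReal.ofReal (‖z‖ ^ 3) ∂ν
        ≤ ENNReal.ofReal (u ^ 3) * ν (s k) := by
      rw [← setLIntegral_const]
      refine setLIntegral_mono' (hsm k) (fun z hz => ?_)
      have : ‖z‖ < u := by
        have := hz.1
        rwa [mem_ball_zero_iff] at this
      exact ENNReal.ofReal_le_ofReal (pow_le_pow_left₀ (norm_nonneg z) this.le 3)
    have step2 : ν (s k) ≤ ∫⁻ z in s k, ENNReal.ofReal (C / ‖z‖ ^ p) ∂volume := by
      refine hdens _ (hsm k) ?_
      refine subset_trans diff_subset (ball_subset_ball ?_)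
      calc r * q ^ k ≤ r * 1 := by
            have : q ^ k ≤ 1 := pow_le_one₀ hq0.le hq1.le
            nlinarith
        _ ≤ 1 := by linarith
    have step3 : ∫⁻ z in s k, ENNReal.ofReal (C / ‖z‖ ^ p) ∂volume
        ≤ ENNReal.ofReal (C / (u * q) ^ p) * volume (s k) := by
      rw [← setLIntegral_const]
      refine setLIntegral_mono' (hsm k) (fun z hz => ?_)
      have hzl : u * q ≤ ‖z‖ := by
        have := hz.2
        rw [mem_ball_zero_iff] at this
        push_neg at this
        calc u * q = r * q ^ (k+1) := by rw [hudef]; ring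
          _ ≤ ‖z‖ := this
      refine ENNReal.ofReal_le_ofReal ?_
      have h1 : (u * q) ^ p ≤ ‖z‖ ^ p := Real.rpow_le_rpow huq0.le hzl (by positivity)
      exact div_le_div_of_nonneg_left hC.le (Real.rpow_pos_of_pos huq0 p) h1
    have step4 : volume (s k) ≤ ENNReal.ofReal (u ^ d) * V := by
      calc volume (s k) ≤ volume (ball (0 : EuclideanSpace ℝ (Fin d)) u) :=
            measure_mono diff_subset
        _ = ENNReal.ofReal (u ^ Module.finrank ℝ (EuclideanSpace ℝ (Fin d))) * V :=
            Measure.addHaar_ball _ _ hu0.le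
        _ = ENNReal.ofReal (u ^ d) * V := by rw [finrank_euclideanSpace_fin]
    calc ∫⁻ z in s k, ENNReal.ofReal (‖z‖ ^ 3) ∂ν
        ≤ ENNReal.ofReal (u ^ 3) * (ENNReal.ofReal (C / (u * q) ^ p) *
            (ENNReal.ofReal (u ^ d) * V)) := by
          refine step1.trans ?_
          refine mul_le_mul_right (step2.trans (step3.trans ?_)) _
          exact mul_le_mul_right step4 _
      _ = ENNReal.ofReal (u ^ 3 * (C / (u * q) ^ p) * u ^ d) * V := by
          rw [ENNReal.ofReal_mul (by positivity), ENNReal.ofReal_mul (by positivity)]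
          ring
      _ = ENNReal.ofReal (C * 2 ^ p * r ^ (3 - σ) * ρ ^ k) * V := by
          congr 1
          apply congrArg
          have e1 : u ^ 3 * (C / (u * q) ^ p) * u ^ d = C * (u ^ (3 + d : ℕ) / (u * q) ^ p) := by
            rw [pow_add]; ring
          rw [e1]
          have e2 : (u ^ (3 + d : ℕ) : ℝ) = u ^ ((3 + d : ℕ) : ℝ) := (Real.rpow_natCast u _).symm
          have e3 : (u * q) ^ p = u ^ p * q ^ p := Real.mul_rpow hu0.le hq0.le
          have e4 : u ^ ((3 + d : ℕ) : ℝ) / u ^ p = u ^ (((3 + d : ℕ) : ℝ) - p) :=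
            (Real.rpow_sub hu0 _ _).symm
          have e5 : ((3 + d : ℕ) : ℝ) - p = 3 - σ := by push_cast [hpdef]; ring
          have e6 : (q ^ p)⁻¹ = 2 ^ p := by
            rw [hqdef, ← Real.inv_rpow (by norm_num), inv_inv]
          have e7 : u ^ (3 - σ) = r ^ (3 - σ) * ρ ^ k := by
            rw [hudef, Real.mul_rpow hr0.le (by positivity)]
            congr 1
            rw [hρdef, ← Real.rpow_natCast q k, ← Real.rpow_mul hq0.le, mul_comm,
              Real.rpow_mul hq0.le, Real.rpow_natCast]
          rw [e2, e3, div_mul_eq_div_div, e4, e5, div_eq_mul_inv, e6, e7]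
          ring
  have hsum : ∑' k, (ENNReal.ofReal (C * 2 ^ p * r ^ (3 - σ) * ρ ^ k) * V)
      = ENNReal.ofReal (C * 2 ^ p * r ^ (3 - σ)) * ((1 - ENNReal.ofReal ρ)⁻¹ * V) := by
    have e1 : ∀ k : ℕ, ENNReal.ofReal (C * 2 ^ p * r ^ (3 - σ) * ρ ^ k) * V
        = ENNReal.ofReal (C * 2 ^ p * r ^ (3 - σ)) * (ENNReal.ofReal ρ) ^ k * V := by
      intro k
      rw [ENNReal.ofReal_mul (by positivity), ENNReal.ofReal_pow hρ0]
    simp_rw [e1]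
    rw [ENNReal.tsum_mul_right, ENNReal.tsum_mul_left, ENNReal.tsum_geometric, mul_assoc]
  refine main.trans ?_
  refine le_trans (ENNReal.tsum_le_tsum hterm) ?_
  rw [hsum]

lemma stmt2_trace_eq (n : ℕ) (Hm S : Matrix (Fin n) (Fin n) ℝ) :
    Matrix.trace (S.transpose * Hm * S) = ∑ a, ∑ b, Hm a b * (S * S.transpose) a b := by
  simp only [Matrix.trace, Matrix.diag, Matrix.mul_apply, Matrix.transpose_apply,
    Finset.sum_mul, Finset.mul_sum]
  conv_rhs => rw [Finset.sum_comm]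
  rw [Finset.sum_comm]
  refine Finset.sum_congr rfl fun a _ => ?_
  rw [Finset.sum_comm]
  refine Finset.sum_congr rfl fun b _ => ?_
  exact Finset.sum_congr rfl fun j _ => by ring

lemma stmt2_abs_coord_le (d : ℕ) (z : EuclideanSpace ℝ (Fin d)) (a : Fin d) : |z a| ≤ ‖z‖ := by
  rw [EuclideanSpace.norm_eq]
  have h : |z a| ^ 2 ≤ ∑ i, ‖z i‖ ^ 2 := by
    have := Finset.single_le_sum (f := fun i => ‖z i‖ ^ 2)
      (fun i _ => sq_nonneg _) (Finset.mem_univ a)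
    simpa [Real.norm_eq_abs, sq_abs] using this
  calc |z a| = Real.sqrt (|z a| ^ 2) := by rw [Real.sqrt_sq (abs_nonneg _)]
    _ ≤ Real.sqrt (∑ i, ‖z i‖ ^ 2) := Real.sqrt_le_sqrt h

lemma stmt2_basis_expand (d : ℕ) (z : EuclideanSpace ℝ (Fin d)) :
    z = ∑ a : Fin d, z a • EuclideanSpace.single a (1:ℝ) := by
  ext j
  rw [WithLp.ofLp_sum, Finset.sum_apply]
  simp [EuclideanSpace.single_apply]

/-- Small-jump approximation lemma. For a Lévy measure ν with density bounded by
C/|z|^{d+σ} on the unit ball (σ ∈ (0,2)), r ∈ (0,1), a matrix σ_r with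
σ_r σ_rᵀ = (1/2)∫_{|z|<r} z zᵀ dν, and φ ∈ C_b³:
|L_r φ(x) − tr(σ_rᵀ D²φ(x) σ_r)| ≤ K r^{3-σ} ‖D³φ‖_∞, with K independent of r, x, φ. -/
theorem stmt2 (d : ℕ) (ν : Measure (EuclideanSpace ℝ (Fin d)))
    (C σ : ℝ) (hC : 0 < C) (hσ1 : 0 < σ) (hσ2 : σ < 2)
    (hlevy : ∫⁻ z, ENNReal.ofReal (min 1 (‖z‖ ^ 2)) ∂ν < ⊤)
    (hdens : ∀ A : Set (EuclideanSpace ℝ (Fin d)), MeasurableSet A → A ⊆ ball 0 1 →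
      ν A ≤ ∫⁻ z in A, ENNReal.ofReal (C / ‖z‖ ^ ((d : ℝ) + σ)) ∂volume) :
    ∃ K : ℝ, 0 < K ∧ ∀ r : ℝ, r ∈ Ioo (0 : ℝ) 1 →
      ∀ σr : Matrix (Fin d) (Fin d) ℝ,
      (∀ i j : Fin d, (σr * σr.transpose) i j =
        (1 / 2) * ∫ z in ball (0 : EuclideanSpace ℝ (Fin d)) r,
          (EuclideanSpace.equiv (Fin d) ℝ z i) * (EuclideanSpace.equiv (Fin d) ℝ z j) ∂ν) →
      ∀ φ : EuclideanSpace ℝ (Fin d) → ℝ, ContDiff ℝ 3 φ →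
      ∀ M3 : ℝ, (∀ x, ‖iteratedFDeriv ℝ 3 φ x‖ ≤ M3) →
      ∀ x : EuclideanSpace ℝ (Fin d),
        |(∫ z in ball (0 : EuclideanSpace ℝ (Fin d)) r,
            (φ (x + z) - φ x - fderiv ℝ φ x z) ∂ν)
          - Matrix.trace (σr.transpose *
              (Matrix.of fun i j : Fin d =>
                iteratedFDeriv ℝ 2 φ x
                  ![EuclideanSpace.single i (1 : ℝ), EuclideanSpace.single j (1 : ℝ)]) * σr)|
          ≤ K * r ^ (3 - σ) * M3 := by
  classical
  set W : ENNReal := (1 - ENNReal.ofReal ((2:ℝ)⁻¹ ^ (3 - σ)))⁻¹ *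
    volume (ball (0 : EuclideanSpace ℝ (Fin d)) 1) with hWdef
  have hWtop : W ≠ ⊤ := by
    have h1 : ENNReal.ofReal ((2:ℝ)⁻¹ ^ (3-σ)) < 1 := by
      rw [ENNReal.ofReal_lt_one]
      exact Real.rpow_lt_one (by norm_num) (by norm_num) (by linarith)
    refine ENNReal.mul_ne_top (ENNReal.inv_ne_top.mpr ?_) measure_ball_lt_top.ne
    intro h0
    rw [tsub_eq_zero_iff_le] at h0
    exact absurd h0 (not_le.mpr h1)
  set K : ℝ := C * 2 ^ ((d:ℝ) + σ) * W.toReal / 2 + 1 with hKdef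
  have hK0 : 0 < K := by positivity
  refine ⟨K, hK0, ?_⟩
  intro r hr σr hσr φ hφ M3 hM3 x
  obtain ⟨hr0, hr1⟩ := hr
  have hM30 : 0 ≤ M3 := le_trans (norm_nonneg _) (hM3 x)
  have hrpow0 : 0 ≤ r ^ (3 - σ) := Real.rpow_nonneg hr0.le _
  set f₂ : EuclideanSpace ℝ (Fin d) → _ := fderiv ℝ (fderiv ℝ φ) with hf₂def
  set e : Fin d → EuclideanSpace ℝ (Fin d) := fun i => EuclideanSpace.single i (1:ℝ) with hedef
  set B : Set (EuclideanSpace ℝ (Fin d)) := ball 0 r with hBdef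
  set μ : Measure (EuclideanSpace ℝ (Fin d)) := ν.restrict B with hμdef
  -- integrability of ‖z‖^2
  have hsql : ∫⁻ z, ENNReal.ofReal (‖z‖ ^ 2) ∂μ < ⊤ := by
    refine lt_of_le_of_lt ?_ hlevy
    rw [hμdef]
    refine le_trans ?_ (setLIntegral_le_lintegral B _)
    refine setLIntegral_mono' measurableSet_ball (fun z hz => ?_)
    have hz1 : ‖z‖ < 1 := by
      rw [hBdef, mem_ball_zero_iff] at hz
      linarith
    refine ENNReal.ofReal_le_ofReal ?_
    rw [min_def]
    split_ifs with h
    · nlinarith [norm_nonneg z]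
    · exact le_rfl
  
  have hsq : Integrable (fun z : EuclideanSpace ℝ (Fin d) => ‖z‖ ^ 2) μ := by
    constructor
    · exact (continuous_norm.pow 2).aestronglyMeasurable
    · rw [hasFiniteIntegral_iff_ofReal (Filter.Eventually.of_forall fun z => by positivity)]
      exact hsql
  have habs : ∀ (z : EuclideanSpace ℝ (Fin d)) (a b : Fin d), |z a * z b| ≤ ‖z‖ ^ 2 := by
    intro z a b
    rw [abs_mul]
    calc |z a| * |z b| ≤ ‖z‖ * ‖z‖ :=
          mul_le_mul (stmt2_abs_coord_le d z a) (stmt2_abs_coord_le d z b)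
            (abs_nonneg _) (norm_nonneg _)
      _ = ‖z‖ ^ 2 := (sq ‖z‖).symm
  have hproj : ∀ a : Fin d, Continuous fun z : EuclideanSpace ℝ (Fin d) => z a :=
    fun a => (EuclideanSpace.proj a).continuous
  have hij : ∀ a b : Fin d, Integrable (fun z : EuclideanSpace ℝ (Fin d) => z a * z b) μ := by
    intro a b
    refine hsq.mono (((hproj a).mul (hproj b)).aestronglyMeasurable)
      (Filter.Eventually.of_forall fun z => ?_)
    rw [Real.norm_eq_abs, Real.norm_eq_abs, abs_of_nonneg (by positivity : (0:ℝ) ≤ ‖z‖ ^ 2)]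
    exact habs z a b
  have hzexp : ∀ z : EuclideanSpace ℝ (Fin d), f₂ x z z
      = ∑ a, ∑ b, z a * z b * (f₂ x (e a) (e b)) := by
    intro z
    conv_lhs => rw [stmt2_basis_expand d z]
    simp only [map_sum, _root_.map_smul, ContinuousLinearMap.sum_apply,
      ContinuousLinearMap.smul_apply, smul_eq_mul, Finset.mul_sum, hedef]
    rw [Finset.sum_comm]
    refine Finset.sum_congr rfl fun a _ => Finset.sum_congr rfl fun b _ => by ring
  have hquadint : Integrable (fun z : EuclideanSpace ℝ (Fin d) => (1/2 : ℝ) * f₂ x z z) μ := by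
    have hsum : Integrable
        (fun z : EuclideanSpace ℝ (Fin d) => ∑ a, ∑ b, z a * z b * f₂ x (e a) (e b)) μ :=
      integrable_finset_sum _ (fun a _ =>
        integrable_finset_sum _ (fun b _ => (hij a b).mul_const _))
    refine (hsum.const_mul (1/2 : ℝ)).congr (Filter.Eventually.of_forall fun z => ?_)
    dsimp only
    rw [hzexp z]
  set g : EuclideanSpace ℝ (Fin d) → ℝ :=
    fun z => φ (x + z) - φ x - fderiv ℝ φ x z - (1/2) * f₂ x z z with hgdef
  have hgbound : ∀ z, |g z| ≤ M3 / 2 * ‖z‖ ^ 3 := fun z => stmt2_taylor2_bound φ hφ M3 hM3 x z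
  have hcubel : ∫⁻ z, ENNReal.ofReal (‖z‖ ^ 3) ∂μ
      ≤ ENNReal.ofReal (C * 2 ^ ((d : ℝ) + σ) * r ^ (3 - σ)) * W :=
    stmt2_nu_cube_bound d ν C σ hC hσ1 hσ2 hdens ⟨hr0, hr1⟩
  have hcubetop : ∫⁻ z, ENNReal.ofReal (‖z‖ ^ 3) ∂μ < ⊤ :=
    lt_of_le_of_lt hcubel (ENNReal.mul_lt_top ENNReal.ofReal_lt_top hWtop.lt_top)
  have hcube : Integrable (fun z : EuclideanSpace ℝ (Fin d) => ‖z‖ ^ 3) μ :=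
    ⟨(continuous_norm.pow 3).aestronglyMeasurable,
      (hasFiniteIntegral_iff_ofReal (Filter.Eventually.of_forall fun z => by positivity)).mpr hcubetop⟩
  have hgcont : Continuous g := by
    have h1 : Continuous fun z : EuclideanSpace ℝ (Fin d) => φ (x + z) :=
      hφ.continuous.comp (continuous_const.add continuous_id)
    have h2 : Continuous fun z : EuclideanSpace ℝ (Fin d) => fderiv ℝ φ x z :=
      (fderiv ℝ φ x).continuous
    have h3 : Continuous fun z : EuclideanSpace ℝ (Fin d) => f₂ x z z := by fun_prop
    rw [hgdef]
    exact ((h1.sub continuous_const).sub h2).sub (continuous_const.mul h3)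
  have hgint : Integrable g μ := by
    refine (hcube.const_mul (M3/2)).mono hgcont.aestronglyMeasurable
      (Filter.Eventually.of_forall fun z => ?_)
    rw [Real.norm_eq_abs]
    exact (hgbound z).trans (le_abs_self _)
  have hsplit : ∫ z, (φ (x + z) - φ x - fderiv ℝ φ x z) ∂μ
      = (∫ z, g z ∂μ) + ∫ z, (1/2 : ℝ) * f₂ x z z ∂μ := by
    rw [← integral_add hgint hquadint]
    refine integral_congr_ae (Filter.Eventually.of_forall fun z => ?_)
    dsimp only [hgdef]
    ring
  set Hm : Matrix (Fin d) (Fin d) ℝ := Matrix.of fun i j : Fin d =>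
    iteratedFDeriv ℝ 2 φ x
      ![EuclideanSpace.single i (1 : ℝ), EuclideanSpace.single j (1 : ℝ)] with hHmdef
  have hHm : ∀ i j, Hm i j = f₂ x (e i) (e j) := by
    intro i j
    show iteratedFDeriv ℝ 2 φ x
      ![EuclideanSpace.single i (1 : ℝ), EuclideanSpace.single j (1 : ℝ)] = _
    rw [iteratedFDeriv_two_apply]
    simp [hedef]
    rfl
  have hquadval : ∫ z, (1/2 : ℝ) * f₂ x z z ∂μ
      = ∑ a, ∑ b, Hm a b * ((σr * σr.transpose) a b) := by
    calc ∫ z, (1/2 : ℝ) * f₂ x z z ∂μ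
        = ∫ z, (1/2 : ℝ) * (∑ a, ∑ b, z a * z b * f₂ x (e a) (e b)) ∂μ := by
          refine integral_congr_ae (Filter.Eventually.of_forall fun z => ?_)
          dsimp only
          rw [hzexp z]
      _ = (1/2 : ℝ) * ∫ z, (∑ a, ∑ b, z a * z b * f₂ x (e a) (e b)) ∂μ :=
          integral_const_mul _ _
      _ = (1/2 : ℝ) * ∑ a, ∑ b, (∫ z, z a * z b ∂μ) * f₂ x (e a) (e b) := by
          rw [integral_finset_sum _ (fun a _ =>
            integrable_finset_sum _ (fun b _ => (hij a b).mul_const _))]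
          congr 1
          refine Finset.sum_congr rfl fun a _ => ?_
          rw [integral_finset_sum _ (fun b _ => (hij a b).mul_const _)]
          refine Finset.sum_congr rfl fun b _ => ?_
          exact integral_mul_const _ _
      _ = ∑ a, ∑ b, Hm a b * ((σr * σr.transpose) a b) := by
          rw [Finset.mul_sum]
          refine Finset.sum_congr rfl fun a _ => ?_
          rw [Finset.mul_sum]
          refine Finset.sum_congr rfl fun b _ => ?_
          rw [hσr a b, hHm a b]
          have hee : ∀ (w : EuclideanSpace ℝ (Fin d)) (i : Fin d),
              EuclideanSpace.equiv (Fin d) ℝ w i = w i := fun _ _ => rfl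
          simp only [hee]
          ring
  have htrace : Matrix.trace (σr.transpose * Hm * σr) = ∫ z, (1/2:ℝ) * f₂ x z z ∂μ := by
    rw [stmt2_trace_eq d Hm σr, hquadval]
  have hdiff : (∫ z, (φ (x + z) - φ x - fderiv ℝ φ x z) ∂μ)
      - Matrix.trace (σr.transpose * Hm * σr) = ∫ z, g z ∂μ := by
    rw [htrace, hsplit]
    ring
  rw [hdiff]
  calc |∫ z, g z ∂μ| ≤ ∫ z, ‖g z‖ ∂μ := by
        rw [← Real.norm_eq_abs]
        exact norm_integral_le_integral_norm g
    _ ≤ ∫ z, M3/2 * ‖z‖ ^ 3 ∂μ := by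
        refine integral_mono hgint.norm (hcube.const_mul _) (fun z => ?_)
        rw [Real.norm_eq_abs]
        exact hgbound z
    _ = M3/2 * ∫ z, ‖z‖ ^ 3 ∂μ := integral_const_mul _ _
    _ ≤ M3/2 * (C * 2 ^ ((d:ℝ) + σ) * r ^ (3 - σ) * W.toReal) := by
        refine mul_le_mul_of_nonneg_left ?_ (by positivity)
        have h1 : ∫ z, ‖z‖ ^ 3 ∂μ = (∫⁻ z, ENNReal.ofReal (‖z‖ ^ 3) ∂μ).toReal :=
          integral_eq_lintegral_of_nonneg_ae (Filter.Eventually.of_forall fun z => by positivity)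
            (continuous_norm.pow 3).aestronglyMeasurable
        have h2 : (∫⁻ z, ENNReal.ofReal (‖z‖ ^ 3) ∂μ).toReal
            ≤ (ENNReal.ofReal (C * 2 ^ ((d:ℝ) + σ) * r ^ (3 - σ)) * W).toReal :=
          ENNReal.toReal_mono (ENNReal.mul_ne_top ENNReal.ofReal_ne_top hWtop) hcubel
        have h3 : (ENNReal.ofReal (C * 2 ^ ((d:ℝ) + σ) * r ^ (3 - σ)) * W).toReal
            = C * 2 ^ ((d:ℝ) + σ) * r ^ (3 - σ) * W.toReal := by
          rw [ENNReal.toReal_mul, ENNReal.toReal_ofReal (by positivity)]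
        rw [h1]
        rw [h3] at h2
        exact h2
    _ ≤ K * r ^ (3 - σ) * M3 := by
        have hw0 : 0 ≤ W.toReal := ENNReal.toReal_nonneg
        have e1 : M3/2 * (C * 2 ^ ((d:ℝ) + σ) * r ^ (3 - σ) * W.toReal)
            = (C * 2 ^ ((d:ℝ) + σ) * W.toReal / 2) * (r ^ (3 - σ) * M3) := by ring
        have e2 : K * r ^ (3 - σ) * M3
            = (C * 2 ^ ((d:ℝ) + σ) * W.toReal / 2) * (r ^ (3 - σ) * M3)
              + r ^ (3 - σ) * M3 := by rw [hKdef]; ring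
        rw [e1, e2]
        have := mul_nonneg hrpow0 hM30
        linarith
end

section
/- Under the assumptions of the small-jump approximation lemma, if additionally φ ∈ C_b⁴(ℝ^d) and ν is symmetric (ν(−A) = ν(A) for all Borel A), then |L_r φ(x) − tr(σ_r^T D²φ(x) σ_r)| ≤ K r^{4-σ} ‖D⁴φ‖_∞. -/
open MeasureTheory Metric Set Matrix
open scoped ENNReal NNReal

section aux
variable {E : Type*} [NormedAddCommGroup E] [NormedSpace ℝ E]
variable {F : Type*} [NormedAddCommGroup F] [NormedSpace ℝ F]

lemma itfd_shift {φ : E → F} {N : ℕ∞} (hφ : ContDiff ℝ N φ) (c : E) :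
    ∀ n : ℕ, (n : ℕ∞) ≤ N → ∀ w, iteratedFDeriv ℝ n (fun z => φ (c + z)) w
      = iteratedFDeriv ℝ n φ (c + w) := by
  intro n
  induction n with
  | zero => intro _ w; ext m; simp
  | succ n IH =>
    intro hn w
    have hn' : (n : ℕ∞) < N := lt_of_lt_of_le (by exact_mod_cast Nat.lt_succ_self n) hn
    have hdiff : DifferentiableAt ℝ (iteratedFDeriv ℝ n φ) (c + w) :=
      (hφ.differentiable_iteratedFDeriv (by exact_mod_cast hn')) _
    have h1 : iteratedFDeriv ℝ n (fun z => φ (c + z)) = fun w => iteratedFDeriv ℝ n φ (c + w) :=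
      funext (IH hn'.le)
    ext m
    rw [iteratedFDeriv_succ_apply_left, iteratedFDeriv_succ_apply_left, h1]
    have h2 : HasFDerivAt (fun w => iteratedFDeriv ℝ n φ (c + w))
        (fderiv ℝ (iteratedFDeriv ℝ n φ) (c + w)) w := by
      have := (hdiff.hasFDerivAt).comp w ((hasFDerivAt_id w).const_add c)
      exact this
    rw [h2.fderiv]

lemma iter_deriv_line {φ : E → F} {N : ℕ∞} (hφ : ContDiff ℝ N φ) (x v : E) {n : ℕ}
    (hn : (n : ℕ∞) ≤ N) (t : ℝ) :
    iteratedDeriv n (fun s : ℝ => φ (x + s • v)) t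
      = iteratedFDeriv ℝ n φ (x + t • v) (fun _ => v) := by
  have hψ : ContDiff ℝ N (fun w => φ (x + w)) := hφ.comp (contDiff_const.add contDiff_id)
  have hL : (fun s : ℝ => φ (x + s • v))
      = (fun w => φ (x + w)) ∘ ((1 : ℝ →L[ℝ] ℝ).smulRight v) := by
    funext s; simp
  rw [iteratedDeriv_eq_iteratedFDeriv, hL,
    ContinuousLinearMap.iteratedFDeriv_comp_right _ hψ _ (by exact_mod_cast hn),
    ContinuousMultilinearMap.compContinuousLinearMap_apply,
    itfd_shift hφ x n hn]
  simp

lemma idw_eq {f : ℝ → F} {N : ℕ∞} {n : ℕ} (hf : ContDiff ℝ N f) (hn : (n : ℕ∞) ≤ N)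
    {s : Set ℝ} (hs : UniqueDiffOn ℝ s) {x : ℝ} (hx : x ∈ s) :
    iteratedDerivWithin n f s x = iteratedDeriv n f x := by
  rw [iteratedDerivWithin_eq_iteratedFDerivWithin, iteratedDeriv_eq_iteratedFDeriv]
  congr 1
  exact (((contDiff_iff_ftaylorSeries.1 hf).hasFTaylorSeriesUpToOn
    s).eq_iteratedFDerivWithin_of_uniqueDiffOn (by exact_mod_cast hn) hs hx).symm

end aux


section aux2
variable {E : Type*} [NormedAddCommGroup E] [NormedSpace ℝ E]
variable {F : Type*} [NormedAddCommGroup F] [NormedSpace ℝ F]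

lemma neg_vec_apply {φ : E → F} (n : ℕ) (x : E) (w : E) :
    iteratedFDeriv ℝ n φ x (fun _ => -w) = (-1 : ℝ) ^ n • iteratedFDeriv ℝ n φ x (fun _ => w) := by
  have h : (fun _ : Fin n => -w) = fun _ : Fin n => (-1 : ℝ) • w := by funext i; simp
  rw [h, ContinuousMultilinearMap.map_smul_univ]
  simp

lemma key_taylor {φ : E → ℝ} (hφ : ContDiff ℝ 4 φ) {M4 : ℝ}
    (hM4 : ∀ y, ‖iteratedFDeriv ℝ 4 φ y‖ ≤ M4) (x z : E) :
    |φ (x + z) + φ (x - z) - 2 * φ x - iteratedFDeriv ℝ 2 φ x (fun _ => z)|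
      ≤ M4 / 3 * ‖z‖ ^ 4 := by
  have hφ' : ContDiff ℝ (4 : ℕ∞) φ := by exact_mod_cast hφ
  set g : ℝ → ℝ := fun t => φ (x + t • z) + φ (x + t • (-z)) with hgdef
  have hca : ContDiff ℝ (4 : ℕ∞) (fun t : ℝ => φ (x + t • z)) :=
    hφ'.comp (contDiff_const.add (contDiff_id.smul contDiff_const))
  have hcb : ContDiff ℝ (4 : ℕ∞) (fun t : ℝ => φ (x + t • (-z))) :=
    hφ'.comp (contDiff_const.add (contDiff_id.smul contDiff_const))
  have hg4 : ContDiff ℝ (4 : ℕ∞) g := hca.add hcb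
  have hder : ∀ n : ℕ, (n : ℕ∞) ≤ 4 → ∀ t : ℝ, iteratedDeriv n g t =
      iteratedFDeriv ℝ n φ (x + t • z) (fun _ => z)
        + iteratedFDeriv ℝ n φ (x + t • (-z)) (fun _ => (-z)) := by
    intro n hn t
    have hsplit : iteratedDeriv n g t = iteratedDeriv n (fun t : ℝ => φ (x + t • z)) t
        + iteratedDeriv n (fun t : ℝ => φ (x + t • (-z))) t := by
      rw [← iteratedDerivWithin_univ, ← iteratedDerivWithin_univ, ← iteratedDerivWithin_univ]
      exact iteratedDerivWithin_add (mem_univ t) uniqueDiffOn_univ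
        (hca.contDiffWithinAt.of_le (by exact_mod_cast hn)) (hcb.contDiffWithinAt.of_le (by exact_mod_cast hn))
    rw [hsplit, iter_deriv_line hφ' x z hn t, iter_deriv_line hφ' x (-z) hn t]
  have hudo : UniqueDiffOn ℝ (Icc (0:ℝ) 1) := uniqueDiffOn_Icc one_pos
  have hbound : ∀ y ∈ Icc (0:ℝ) 1,
      ‖iteratedDerivWithin 4 g (Icc 0 1) y‖ ≤ 2 * M4 * ‖z‖ ^ 4 := by
    intro y hy
    rw [idw_eq hg4 (by norm_num) hudo hy, hder 4 (by norm_num) y]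
    refine (norm_add_le _ _).trans ?_
    have b1 : ∀ (w : E) (v : E), ‖iteratedFDeriv ℝ 4 φ w (fun _ : Fin 4 => v)‖ ≤ M4 * ‖v‖ ^ 4 := by
      intro w v
      refine (ContinuousMultilinearMap.le_opNorm _ _).trans ?_
      have : ∏ _i : Fin 4, ‖v‖ = ‖v‖ ^ 4 := by
        simp [Finset.prod_const]
      rw [this]
      exact mul_le_mul_of_nonneg_right (hM4 w) (by positivity)
    have := b1 (x + y • z) z
    have h2 := b1 (x + y • (-z)) (-z)
    rw [norm_neg] at h2
    linarith
  have hcg : ContDiffOn ℝ ((3 : ℕ) + 1) g (Icc (0:ℝ) 1) := by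
    exact (hg4.of_le (by norm_num)).contDiffOn
  have htb := taylor_mean_remainder_bound (zero_le_one) hcg (right_mem_Icc.2 zero_le_one) hbound
  -- compute the taylor polynomial
  have h0 : (0 : ℝ) ∈ Icc (0:ℝ) 1 := left_mem_Icc.2 zero_le_one
  have hx0 : ∀ v : E, x + (0:ℝ) • v = x := by intro v; simp
  have e0 : iteratedDerivWithin 0 g (Icc 0 1) 0 = 2 * φ x := by
    rw [idw_eq hg4 (by norm_num) hudo h0, hder 0 (by norm_num) 0]
    simp [hx0]; ring
  have e1 : iteratedDerivWithin 1 g (Icc 0 1) 0 = 0 := by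
    rw [idw_eq hg4 (by norm_num) hudo h0, hder 1 (by norm_num) 0, hx0, hx0, neg_vec_apply]
    simp
  have e2 : iteratedDerivWithin 2 g (Icc 0 1) 0
      = 2 * iteratedFDeriv ℝ 2 φ x (fun _ => z) := by
    rw [idw_eq hg4 (by norm_num) hudo h0, hder 2 (by norm_num) 0, hx0, hx0, neg_vec_apply]
    simp; ring
  have e3 : iteratedDerivWithin 3 g (Icc 0 1) 0 = 0 := by
    rw [idw_eq hg4 (by norm_num) hudo h0, hder 3 (by norm_num) 0, hx0, hx0, neg_vec_apply]
    simp only [smul_eq_mul]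
    ring
  have htay : taylorWithinEval g 3 (Icc 0 1) 0 1
      = 2 * φ x + iteratedFDeriv ℝ 2 φ x (fun _ => z) := by
    rw [taylor_within_apply]
    rw [Finset.sum_range_succ, Finset.sum_range_succ, Finset.sum_range_succ,
      Finset.sum_range_one, e0, e1, e2, e3]
    norm_num [Nat.factorial]
    ring
  have hg1 : g 1 = φ (x + z) + φ (x - z) := by
    simp [hgdef, sub_eq_add_neg]
  rw [htay, hg1] at htb
  have : |φ (x + z) + φ (x - z) - 2 * φ x - iteratedFDeriv ℝ 2 φ x (fun _ => z)|
      = ‖φ (x + z) + φ (x - z) - (2 * φ x + iteratedFDeriv ℝ 2 φ x (fun _ => z))‖ := by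
    rw [Real.norm_eq_abs]; ring_nf
  rw [this]
  refine htb.trans ?_
  norm_num [Nat.factorial]
  ring_nf
  nlinarith [norm_nonneg z, hM4 x, (norm_nonneg (iteratedFDeriv ℝ 4 φ x)), pow_nonneg (norm_nonneg z) 4]

end aux2


lemma coord_abs_le_norm {d : ℕ} (z : EuclideanSpace ℝ (Fin d)) (i : Fin d) : |z i| ≤ ‖z‖ := by
  have h1 : |z i| = Real.sqrt (z i ^ 2) := (Real.sqrt_sq_eq_abs _).symm
  rw [h1, EuclideanSpace.norm_eq]
  apply Real.sqrt_le_sqrt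
  have : z i ^ 2 = ‖z i‖ ^ 2 := by rw [Real.norm_eq_abs, sq_abs]
  rw [this]
  exact Finset.single_le_sum (f := fun j => ‖z j‖ ^ 2) (fun j _ => by positivity) (Finset.mem_univ i)

lemma euclid_decomp {d : ℕ} (z : EuclideanSpace ℝ (Fin d)) :
    z = ∑ i, z i • EuclideanSpace.single i (1:ℝ) := by
  have := (EuclideanSpace.basisFun (Fin d) ℝ).sum_repr z
  simp_rw [EuclideanSpace.basisFun_repr, EuclideanSpace.basisFun_apply] at this
  exact this.symm

lemma bilin_expand {d : ℕ}
    (F2 : ContinuousMultilinearMap ℝ (fun _ : Fin 2 => EuclideanSpace ℝ (Fin d)) ℝ)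
    (z : EuclideanSpace ℝ (Fin d)) :
    F2 (fun _ => z) = ∑ i, ∑ j, (z i * z j) *
      F2 ![EuclideanSpace.single i (1:ℝ), EuclideanSpace.single j (1:ℝ)] := by
  set e : Fin d → EuclideanSpace ℝ (Fin d) := fun i => EuclideanSpace.single i (1:ℝ) with he
  have hz : (fun _ : Fin 2 => z) = fun _ : Fin 2 => ∑ i, z i • e i := by
    funext k; exact euclid_decomp z
  rw [hz]
  rw [F2.map_sum]
  rw [Fintype.sum_equiv (piFinTwoEquiv fun _ => Fin d)
    (fun r => F2 fun k => z (r k) • e (r k))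
    (fun p => (z p.1 * z p.2) • F2 ![e p.1, e p.2]) ?_]
  · rw [Fintype.sum_prod_type]
    simp [smul_eq_mul, he]
  · intro r
    dsimp only
    rw [F2.map_smul_univ]
    have h1 : (fun k : Fin 2 => e (r k)) = ![e (r 0), e (r 1)] := by
      funext k; fin_cases k <;> simp
    rw [h1, Fin.prod_univ_two]
    simp [piFinTwoEquiv]


lemma radial_bound {d : ℕ} (hd : 0 < d) (C σ : ℝ) (hC : 0 < C) (hσ1 : 0 < σ) (hσ2 : σ < 2)
    {r : ℝ} (hr0 : 0 < r) (hr1 : r < 1) :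
    ∫⁻ z in ball (0 : EuclideanSpace ℝ (Fin d)) r,
        ENNReal.ofReal (‖z‖ ^ 4) * ENNReal.ofReal (C / ‖z‖ ^ ((d : ℝ) + σ)) ∂volume
      ≤ ENNReal.ofReal
          ((C * 2 ^ ((d : ℝ) + 2) * (volume (ball (0 : EuclideanSpace ℝ (Fin d)) 1)).toReal * 2)
            * r ^ (4 - σ)) := by
  classical
  haveI : Nontrivial (EuclideanSpace ℝ (Fin d)) := by
    refine ⟨⟨0, EuclideanSpace.single ⟨0, hd⟩ (1:ℝ), fun h => ?_⟩⟩
    have h0 := congrArg (fun v : EuclideanSpace ℝ (Fin d) => v ⟨0, hd⟩) h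
    simp [EuclideanSpace.single_apply] at h0
  set V : ℝ≥0∞ := volume (ball (0 : EuclideanSpace ℝ (Fin d)) 1) with hV
  set s : ℕ → ℝ := fun n => r / 2 ^ n with hs
  have hspos : ∀ n, 0 < s n := fun n => div_pos hr0 (by positivity)
  have hssucc : ∀ n, s (n + 1) = s n / 2 := by
    intro n; simp only [hs]; rw [pow_succ, ← div_div]
  set hfun : EuclideanSpace ℝ (Fin d) → ℝ≥0∞ :=
    fun z => ENNReal.ofReal (‖z‖ ^ 4) * ENNReal.ofReal (C / ‖z‖ ^ ((d : ℝ) + σ)) with hfn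
  -- covering
  have hsub : ball (0 : EuclideanSpace ℝ (Fin d)) r \ {0}
      ⊆ ⋃ n, (ball (0 : EuclideanSpace ℝ (Fin d)) (s n) \ ball 0 (s (n + 1))) := by
    rintro z ⟨hzb, hz0⟩
    rw [mem_ball_zero_iff] at hzb
    rw [mem_singleton_iff] at hz0
    have hzpos : 0 < ‖z‖ := norm_pos_iff.2 hz0
    have hex : ∃ n : ℕ, s n ≤ ‖z‖ := by
      obtain ⟨n, hn⟩ := exists_pow_lt_of_lt_one (div_pos hzpos hr0)
        (by norm_num : (2:ℝ)⁻¹ < 1)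
      refine ⟨n, ?_⟩
      have hsn : s n = r * (2:ℝ)⁻¹ ^ n := by simp [hs, div_eq_mul_inv, inv_pow]
      rw [hsn]
      have := mul_lt_mul_of_pos_left hn hr0
      rw [mul_div_cancel₀ _ hr0.ne'] at this
      exact this.le
    have hNspec : s (Nat.find hex) ≤ ‖z‖ := Nat.find_spec hex
    have hN0 : Nat.find hex ≠ 0 := by
      intro h
      rw [h] at hNspec
      simp only [hs, pow_zero, div_one] at hNspec
      linarith
    obtain ⟨m, hm⟩ := Nat.exists_eq_succ_of_ne_zero hN0
    refine mem_iUnion.2 ⟨m, ⟨?_, ?_⟩⟩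
    · rw [mem_ball_zero_iff]
      have := Nat.find_min hex (by omega : m < Nat.find hex)
      exact not_le.1 this
    · intro hmem
      rw [mem_ball_zero_iff] at hmem
      rw [hm] at hNspec
      simp only [Nat.succ_eq_add_one] at hNspec
      linarith
  -- per-annulus bound
  have hann : ∀ n : ℕ,
      (∫⁻ z in ball (0 : EuclideanSpace ℝ (Fin d)) (s n) \ ball 0 (s (n + 1)), hfun z ∂volume)
        ≤ ENNReal.ofReal (C * 2 ^ ((d : ℝ) + 2) * r ^ ((4:ℝ) - σ) * (4:ℝ)⁻¹ ^ n) * V := by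
    intro n
    have hpt : ∀ z ∈ ball (0 : EuclideanSpace ℝ (Fin d)) (s n) \ ball 0 (s (n + 1)),
        hfun z ≤ ENNReal.ofReal ((s n) ^ 4 * (C / (s (n + 1)) ^ ((d : ℝ) + σ))) := by
      rintro z ⟨hz1, hz2⟩
      rw [mem_ball_zero_iff] at hz1
      have hz2' : s (n + 1) ≤ ‖z‖ :=
        not_lt.1 (fun hlt => hz2 (mem_ball_zero_iff.2 hlt))
      simp only [hfn]
      rw [← ENNReal.ofReal_mul (by positivity)]
      apply ENNReal.ofReal_le_ofReal
      have e1 : ‖z‖ ^ 4 ≤ (s n) ^ 4 := pow_le_pow_left₀ (norm_nonneg z) hz1.le 4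
      have e2 : C / ‖z‖ ^ ((d : ℝ) + σ) ≤ C / (s (n + 1)) ^ ((d : ℝ) + σ) := by
        apply div_le_div_of_nonneg_left hC.le (Real.rpow_pos_of_pos (hspos _) _)
        exact Real.rpow_le_rpow (hspos _).le hz2' (by positivity)
      exact mul_le_mul e1 e2 (by positivity) (by positivity)
    have hreal : (s n) ^ 4 * (C / (s (n + 1)) ^ ((d : ℝ) + σ)) * (s n) ^ d
        ≤ C * 2 ^ ((d : ℝ) + 2) * r ^ ((4:ℝ) - σ) * (4:ℝ)⁻¹ ^ n := by
      have ht := hspos n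
      have key1 : (s (n + 1)) ^ ((d : ℝ) + σ) = (s n) ^ ((d : ℝ) + σ) / 2 ^ ((d : ℝ) + σ) := by
        rw [hssucc n, Real.div_rpow ht.le (by norm_num)]
      have lhs_eq : (s n) ^ 4 * (C / (s (n + 1)) ^ ((d : ℝ) + σ)) * (s n) ^ d
          = C * 2 ^ ((d : ℝ) + σ) * (s n) ^ ((4:ℝ) - σ) := by
        rw [key1, div_div_eq_mul_div]
        rw [show ((s n : ℝ) ^ (4:ℕ)) = (s n) ^ ((4:ℕ) : ℝ) from (Real.rpow_natCast _ 4).symm]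
        rw [show ((s n : ℝ) ^ (d:ℕ)) = (s n) ^ ((d:ℕ) : ℝ) from (Real.rpow_natCast _ d).symm]
        rw [div_eq_mul_inv, ← Real.rpow_neg ht.le]
        rw [show ((4:ℝ) - σ) = ((4:ℕ):ℝ) + (-(((d:ℕ):ℝ) + σ)) + ((d:ℕ):ℝ) by push_cast; ring]
        rw [Real.rpow_add ht, Real.rpow_add ht]
        ring
      rw [lhs_eq]
      have h2exp : (2:ℝ) ^ ((d : ℝ) + σ) ≤ 2 ^ ((d : ℝ) + 2) :=
        Real.rpow_le_rpow_of_exponent_le one_le_two (by linarith)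
      have hsn : (s n) ^ ((4:ℝ) - σ) ≤ r ^ ((4:ℝ) - σ) * (4:ℝ)⁻¹ ^ n := by
        have hsneq : s n = r * ((2:ℝ) ^ n)⁻¹ := by simp [hs, div_eq_mul_inv]
        rw [hsneq, Real.mul_rpow hr0.le (by positivity)]
        apply mul_le_mul_of_nonneg_left ?_ (Real.rpow_nonneg hr0.le _)
        have e4 : ((4:ℝ)⁻¹) ^ n = (2:ℝ) ^ (-(2 * (n:ℝ))) := by
          rw [show (4:ℝ)⁻¹ = (2:ℝ) ^ ((-2 : ℝ)) by
            rw [Real.rpow_neg (by norm_num), show ((2:ℝ) ^ (2:ℝ)) = 4 by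
              rw [show (2:ℝ) = ((2:ℕ):ℝ) by norm_num, Real.rpow_natCast]; norm_num]]
          rw [← Real.rpow_natCast ((2:ℝ) ^ ((-2):ℝ)) n, ← Real.rpow_mul (by norm_num)]
          ring_nf
        rw [e4]
        rw [← Real.rpow_natCast (2:ℝ) n, ← Real.rpow_neg (by norm_num : (0:ℝ) ≤ 2),
          ← Real.rpow_mul (by norm_num : (0:ℝ) ≤ 2)]
        apply Real.rpow_le_rpow_of_exponent_le one_le_two
        have hn0 : (0:ℝ) ≤ (n:ℝ) := Nat.cast_nonneg n
        nlinarith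
      calc C * 2 ^ ((d : ℝ) + σ) * (s n) ^ ((4:ℝ) - σ)
          ≤ C * 2 ^ ((d : ℝ) + 2) * (r ^ ((4:ℝ) - σ) * (4:ℝ)⁻¹ ^ n) := by
            apply mul_le_mul (mul_le_mul_of_nonneg_left h2exp hC.le) hsn
              (Real.rpow_nonneg (hspos n).le _) (by positivity)
        _ = C * 2 ^ ((d : ℝ) + 2) * r ^ ((4:ℝ) - σ) * (4:ℝ)⁻¹ ^ n := by ring
    calc (∫⁻ z in ball (0 : EuclideanSpace ℝ (Fin d)) (s n) \ ball 0 (s (n + 1)), hfun z ∂volume)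
        ≤ ∫⁻ _z in ball (0 : EuclideanSpace ℝ (Fin d)) (s n) \ ball 0 (s (n + 1)),
            ENNReal.ofReal ((s n) ^ 4 * (C / (s (n + 1)) ^ ((d : ℝ) + σ))) ∂volume :=
          setLIntegral_mono measurable_const hpt
      _ = ENNReal.ofReal ((s n) ^ 4 * (C / (s (n + 1)) ^ ((d : ℝ) + σ)))
            * volume (ball (0 : EuclideanSpace ℝ (Fin d)) (s n) \ ball 0 (s (n + 1))) :=
          setLIntegral_const _ _
      _ ≤ ENNReal.ofReal ((s n) ^ 4 * (C / (s (n + 1)) ^ ((d : ℝ) + σ)))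
            * volume (ball (0 : EuclideanSpace ℝ (Fin d)) (s n)) :=
          mul_le_mul_right (measure_mono diff_subset) _
      _ = ENNReal.ofReal ((s n) ^ 4 * (C / (s (n + 1)) ^ ((d : ℝ) + σ)))
            * (ENNReal.ofReal ((s n) ^ d) * V) := by
          rw [Measure.addHaar_ball volume 0 (hspos n).le]
          have hfr : Module.finrank ℝ (EuclideanSpace ℝ (Fin d)) = d := by
            simp [finrank_euclideanSpace_fin]
          rw [hfr, hV]
      _ = ENNReal.ofReal ((s n) ^ 4 * (C / (s (n + 1)) ^ ((d : ℝ) + σ)) * (s n) ^ d) * V := by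
          rw [← mul_assoc, ← ENNReal.ofReal_mul (by positivity)]
      _ ≤ ENNReal.ofReal (C * 2 ^ ((d : ℝ) + 2) * r ^ ((4:ℝ) - σ) * (4:ℝ)⁻¹ ^ n) * V :=
          mul_le_mul_left (ENNReal.ofReal_le_ofReal hreal) _
  -- sum the geometric series
  have hgeo : (∑' n : ℕ, ENNReal.ofReal ((4:ℝ)⁻¹ ^ n)) ≤ 2 := by
    have hterm : ∀ n : ℕ, ENNReal.ofReal ((4:ℝ)⁻¹ ^ n) ≤ (2:ℝ≥0∞)⁻¹ ^ n := by
      intro n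
      rw [ENNReal.ofReal_pow (by norm_num)]
      apply pow_le_pow_left' ?_ n
      rw [show ((2:ℝ≥0∞))⁻¹ = ENNReal.ofReal (2⁻¹) by
        rw [ENNReal.ofReal_inv_of_pos (by norm_num)]; norm_num]
      exact ENNReal.ofReal_le_ofReal (by norm_num)
    calc (∑' n : ℕ, ENNReal.ofReal ((4:ℝ)⁻¹ ^ n)) ≤ ∑' n : ℕ, (2:ℝ≥0∞)⁻¹ ^ n :=
          ENNReal.tsum_le_tsum hterm
      _ = (1 - 2⁻¹)⁻¹ := ENNReal.tsum_geometric _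
      _ = 2 := by rw [ENNReal.one_sub_inv_two, inv_inv]
  have hnull : (volume : Measure (EuclideanSpace ℝ (Fin d))) (ball 0 r ∩ {0}) = 0 :=
    measure_mono_null inter_subset_right (measure_singleton 0)
  calc (∫⁻ z in ball (0 : EuclideanSpace ℝ (Fin d)) r, hfun z ∂volume)
      = ∫⁻ z in ball (0 : EuclideanSpace ℝ (Fin d)) r \ {0}, hfun z ∂volume := by
        refine (setLIntegral_congr ?_).symm
        exact diff_ae_eq_self.2 hnull
    _ ≤ ∫⁻ z in ⋃ n, (ball (0 : EuclideanSpace ℝ (Fin d)) (s n) \ ball 0 (s (n + 1))),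
          hfun z ∂volume := lintegral_mono_set hsub
    _ ≤ ∑' n : ℕ, ∫⁻ z in ball (0 : EuclideanSpace ℝ (Fin d)) (s n) \ ball 0 (s (n + 1)),
          hfun z ∂volume := lintegral_iUnion_le _ _
    _ ≤ ∑' n : ℕ, ENNReal.ofReal (C * 2 ^ ((d : ℝ) + 2) * r ^ ((4:ℝ) - σ) * (4:ℝ)⁻¹ ^ n) * V :=
        ENNReal.tsum_le_tsum fun n => hann n
    _ = ENNReal.ofReal (C * 2 ^ ((d : ℝ) + 2) * r ^ ((4:ℝ) - σ))
          * (∑' n : ℕ, ENNReal.ofReal ((4:ℝ)⁻¹ ^ n)) * V := by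
        rw [ENNReal.tsum_mul_right, ← ENNReal.tsum_mul_left]
        congr 1
        apply tsum_congr
        intro n
        rw [← ENNReal.ofReal_mul (by positivity)]
    _ ≤ ENNReal.ofReal (C * 2 ^ ((d : ℝ) + 2) * r ^ ((4:ℝ) - σ)) * 2 * V :=
        mul_le_mul_left (mul_le_mul_right hgeo _) _
    _ ≤ ENNReal.ofReal
          ((C * 2 ^ ((d : ℝ) + 2) * (volume (ball (0 : EuclideanSpace ℝ (Fin d)) 1)).toReal * 2)
            * r ^ (4 - σ)) := by
        have hVfin : V ≠ ⊤ := (measure_ball_lt_top).ne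
        have h2 : ENNReal.ofReal (C * 2 ^ ((d : ℝ) + 2) * r ^ ((4:ℝ) - σ)) * 2 * V
            = ENNReal.ofReal ((C * 2 ^ ((d : ℝ) + 2) * V.toReal * 2) * r ^ (4 - σ)) := by
          conv_lhs => rw [show (2:ℝ≥0∞) = ENNReal.ofReal (2:ℝ) by simp,
            show V = ENNReal.ofReal V.toReal from (ENNReal.ofReal_toReal hVfin).symm]
          rw [← ENNReal.ofReal_mul (by positivity), ← ENNReal.ofReal_mul (by positivity)]
          congr 1
          ring
        rw [← hV]
        exact le_of_eq h2


set_option maxHeartbeats 1000000 in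
/-- Small-jump approximation with symmetric Lévy measure and φ ∈ C_b⁴:
|L_r φ(x) − tr(σ_rᵀ D²φ(x) σ_r)| ≤ K r^{4-σ} ‖D⁴φ‖_∞. -/
theorem stmt3 (d : ℕ) (ν : Measure (EuclideanSpace ℝ (Fin d)))
    (C σ : ℝ) (hC : 0 < C) (hσ1 : 0 < σ) (hσ2 : σ < 2)
    (hlevy : ∫⁻ z, ENNReal.ofReal (min 1 (‖z‖ ^ 2)) ∂ν < ⊤)
    (hdens : ∀ A : Set (EuclideanSpace ℝ (Fin d)), MeasurableSet A → A ⊆ ball 0 1 →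
      ν A ≤ ∫⁻ z in A, ENNReal.ofReal (C / ‖z‖ ^ ((d : ℝ) + σ)) ∂volume)
    (hsymm : ν.map (fun z => -z) = ν) :
    ∃ K : ℝ, 0 < K ∧ ∀ r : ℝ, r ∈ Ioo (0 : ℝ) 1 →
      ∀ σr : Matrix (Fin d) (Fin d) ℝ,
      (∀ i j : Fin d, (σr * σr.transpose) i j =
        (1 / 2) * ∫ z in ball (0 : EuclideanSpace ℝ (Fin d)) r,
          (EuclideanSpace.equiv (Fin d) ℝ z i) * (EuclideanSpace.equiv (Fin d) ℝ z j) ∂ν) →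
      ∀ φ : EuclideanSpace ℝ (Fin d) → ℝ, ContDiff ℝ 4 φ →
      ∀ M4 : ℝ, (∀ x, ‖iteratedFDeriv ℝ 4 φ x‖ ≤ M4) →
      ∀ x : EuclideanSpace ℝ (Fin d),
        |(∫ z in ball (0 : EuclideanSpace ℝ (Fin d)) r,
            (φ (x + z) - φ x - fderiv ℝ φ x z) ∂ν)
          - Matrix.trace (σr.transpose *
              (Matrix.of fun i j : Fin d =>
                iteratedFDeriv ℝ 2 φ x
                  ![EuclideanSpace.single i (1 : ℝ), EuclideanSpace.single j (1 : ℝ)]) * σr)|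
          ≤ K * r ^ (4 - σ) * M4 := by
  classical
  rcases Nat.eq_zero_or_pos d with hd0 | hd
  · -- degenerate case d = 0
    subst hd0
    refine ⟨1, one_pos, ?_⟩
    intro r hr σr _hcov φ hφ M4 hM4 x
    haveI : Subsingleton (EuclideanSpace ℝ (Fin 0)) :=
      ⟨fun a b => (WithLp.ext_iff 2).2 (funext fun i => Fin.elim0 i)⟩
    have hM40 : 0 ≤ M4 := le_trans (norm_nonneg _) (hM4 x)
    have hz0 : ∀ z : EuclideanSpace ℝ (Fin 0),
        φ (x + z) - φ x - fderiv ℝ φ x z = 0 := by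
      intro z
      have hz : z = 0 := Subsingleton.elim z 0
      rw [hz]; simp
    have hI : (∫ z in ball (0 : EuclideanSpace ℝ (Fin 0)) r,
        (φ (x + z) - φ x - fderiv ℝ φ x z) ∂ν) = 0 := by
      simp only [hz0, integral_zero]
    have hT : Matrix.trace (σr.transpose *
        (Matrix.of fun i j : Fin 0 =>
          iteratedFDeriv ℝ 2 φ x
            ![EuclideanSpace.single i (1 : ℝ), EuclideanSpace.single j (1 : ℝ)]) * σr) = 0 := by
      simp [Matrix.trace]
    rw [hI, hT]
    simp only [sub_zero, abs_zero, one_mul]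
    have : 0 < r ^ (4 - σ) := Real.rpow_pos_of_pos hr.1 _
    positivity
  · -- main case
    set c₀ : ℝ := C * 2 ^ ((d : ℝ) + 2)
        * (volume (ball (0 : EuclideanSpace ℝ (Fin d)) 1)).toReal * 2 with hc₀
    have hc₀0 : 0 ≤ c₀ := by positivity
    refine ⟨c₀ / 6 + 1, by positivity, ?_⟩
    intro r hr σr hcov φ hφ M4 hM4 x
    obtain ⟨hr0, hr1⟩ := hr
    have hM40 : 0 ≤ M4 := le_trans (norm_nonneg _) (hM4 x)
    set B := ball (0 : EuclideanSpace ℝ (Fin d)) r with hB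
    set μr := ν.restrict B with hμr
    have hφc : Continuous φ := hφ.continuous
    have hfcont : Continuous (fun z : EuclideanSpace ℝ (Fin d) =>
        φ (x + z) - φ x - fderiv ℝ φ x z) :=
      ((hφc.comp (continuous_const.add continuous_id)).sub continuous_const).sub
        (fderiv ℝ φ x).continuous
    have hball1 : ∀ z : EuclideanSpace ℝ (Fin d), z ∈ B → ‖z‖ ≤ 1 := by
      intro z hz
      rw [hB, mem_ball_zero_iff] at hz
      linarith
    -- integrability of ‖z‖^2
    have hlevy_ball : ∫⁻ z in B, ENNReal.ofReal (‖z‖ ^ 2) ∂ν < ⊤ := by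
      have h1 : ∫⁻ z in B, ENNReal.ofReal (‖z‖ ^ 2) ∂ν
          = ∫⁻ z in B, ENNReal.ofReal (min 1 (‖z‖ ^ 2)) ∂ν := by
        refine setLIntegral_congr_fun measurableSet_ball (fun z hz => ?_)
        rw [min_eq_right]
        nlinarith [hball1 z hz, norm_nonneg z]
      rw [h1]
      exact lt_of_le_of_lt (setLIntegral_le_lintegral _ _) hlevy
    have hInt2 : Integrable (fun z : EuclideanSpace ℝ (Fin d) => ‖z‖ ^ 2) μr := by
      refine ⟨(continuous_norm.pow 2).aestronglyMeasurable, ?_⟩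
      rw [hasFiniteIntegral_iff_norm]
      have : ∀ z : EuclideanSpace ℝ (Fin d), ENNReal.ofReal ‖‖z‖ ^ 2‖
          = ENNReal.ofReal (‖z‖ ^ 2) := by
        intro z; rw [Real.norm_of_nonneg (by positivity)]
      simp only [this]
      exact hlevy_ball
    have haebound : ∀ (g : EuclideanSpace ℝ (Fin d) → ℝ),
        (∀ z, z ∈ B → ‖g z‖ ≤ ‖z‖ ^ 2) → ∀ᵐ z ∂μr, ‖g z‖ ≤ ‖z‖ ^ 2 := by
      intro g hg
      rw [hμr]
      exact (ae_restrict_iff' measurableSet_ball).2 (ae_of_all _ hg)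
    -- quadratic bound on f
    have hφ4 : ContDiff ℝ (4:ℕ∞) φ := by exact_mod_cast hφ
    have hfd1 : ContDiff ℝ 1 (fderiv ℝ φ) := by
      apply hφ4.fderiv_right
      norm_num
    obtain ⟨M2, hM2⟩ := (isCompact_closedBall x 1).exists_bound_of_continuousOn
      ((hfd1.continuous_fderiv one_ne_zero).continuousOn)
    have hM20 : 0 ≤ M2 := le_trans (norm_nonneg _) (hM2 x (mem_closedBall_self zero_le_one))
    have hDlip : ∀ w ∈ closedBall x 1, ‖fderiv ℝ φ w - fderiv ℝ φ x‖ ≤ M2 * ‖w - x‖ := by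
      intro w hw
      exact Convex.norm_image_sub_le_of_norm_fderiv_le
        (fun y _ => (hfd1.differentiable one_ne_zero).differentiableAt)
        hM2 (convex_closedBall x 1) (mem_closedBall_self zero_le_one) hw
    have hquad : ∀ z : EuclideanSpace ℝ (Fin d), ‖z‖ ≤ 1 →
        |φ (x + z) - φ x - fderiv ℝ φ x z| ≤ M2 * ‖z‖ ^ 2 := by
      intro z hz
      set G : EuclideanSpace ℝ (Fin d) → ℝ := fun w => φ w - fderiv ℝ φ x w with hG
      have hGd : ∀ w, DifferentiableAt ℝ G w := fun w =>
        ((hφ4.differentiable (by norm_num)).differentiableAt).sub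
          (fderiv ℝ φ x).differentiableAt
      have hGderiv : ∀ w, fderiv ℝ G w = fderiv ℝ φ w - fderiv ℝ φ x := by
        intro w
        rw [hG]
        rw [fderiv_fun_sub ((hφ4.differentiable (by norm_num)).differentiableAt)
          (fderiv ℝ φ x).differentiableAt, (fderiv ℝ φ x).fderiv]
      have hsball : closedBall x ‖z‖ ⊆ closedBall x 1 := closedBall_subset_closedBall hz
      have hbd : ∀ w ∈ closedBall x ‖z‖, ‖fderiv ℝ G w‖ ≤ M2 * ‖z‖ := by
        intro w hw
        rw [hGderiv w]
        refine (hDlip w (hsball hw)).trans ?_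
        have : ‖w - x‖ ≤ ‖z‖ := by
          rw [← dist_eq_norm]; exact mem_closedBall.1 hw
        exact mul_le_mul_of_nonneg_left this hM20
      have hmv := Convex.norm_image_sub_le_of_norm_fderiv_le
        (fun y _ => hGd y) hbd (convex_closedBall x ‖z‖)
        (mem_closedBall_self (norm_nonneg z))
        (by rw [mem_closedBall, dist_eq_norm, add_sub_cancel_left] :
          x + z ∈ closedBall x ‖z‖)
      have hGG : G (x + z) - G x = φ (x + z) - φ x - fderiv ℝ φ x z := by
        rw [hG]
        simp only [map_add]
        ring
      rw [hGG, add_sub_cancel_left] at hmv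
      rw [← Real.norm_eq_abs]
      calc ‖φ (x + z) - φ x - fderiv ℝ φ x z‖ ≤ M2 * ‖z‖ * ‖z‖ := hmv
        _ = M2 * ‖z‖ ^ 2 := by ring
    -- integrability of all the pieces
    have hIntf : Integrable (fun z : EuclideanSpace ℝ (Fin d) =>
        φ (x + z) - φ x - fderiv ℝ φ x z) μr := by
      refine Integrable.mono' (hInt2.const_mul M2) hfcont.aestronglyMeasurable ?_
      rw [hμr]
      refine (ae_restrict_iff' measurableSet_ball).2 (ae_of_all _ fun z hz => ?_)
      rw [Real.norm_eq_abs]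
      exact hquad z (hball1 z hz)
    have hfnegcont : Continuous (fun z : EuclideanSpace ℝ (Fin d) =>
        φ (x + -z) - φ x - fderiv ℝ φ x (-z)) := by
      exact hfcont.comp continuous_neg
    have hIntfneg : Integrable (fun z : EuclideanSpace ℝ (Fin d) =>
        φ (x + -z) - φ x - fderiv ℝ φ x (-z)) μr := by
      refine Integrable.mono' (hInt2.const_mul M2) hfnegcont.aestronglyMeasurable ?_
      rw [hμr]
      refine (ae_restrict_iff' measurableSet_ball).2 (ae_of_all _ fun z hz => ?_)
      rw [Real.norm_eq_abs]
      have := hquad (-z) (by rw [norm_neg]; exact hball1 z hz)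
      simpa [norm_neg] using this
    have hQcont : Continuous (fun z : EuclideanSpace ℝ (Fin d) =>
        iteratedFDeriv ℝ 2 φ x (fun _ => z)) := by
      exact (iteratedFDeriv ℝ 2 φ x).cont.comp (continuous_pi fun _ => continuous_id)
    have hQbound : ∀ z : EuclideanSpace ℝ (Fin d),
        ‖iteratedFDeriv ℝ 2 φ x (fun _ => z)‖ ≤ ‖iteratedFDeriv ℝ 2 φ x‖ * ‖z‖ ^ 2 := by
      intro z
      refine (ContinuousMultilinearMap.le_opNorm _ _).trans ?_
      have : ∏ _i : Fin 2, ‖z‖ = ‖z‖ ^ 2 := by simp [Finset.prod_const]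
      rw [this]
    have hIntQ : Integrable (fun z : EuclideanSpace ℝ (Fin d) =>
        iteratedFDeriv ℝ 2 φ x (fun _ => z)) μr := by
      refine Integrable.mono' (hInt2.const_mul ‖iteratedFDeriv ℝ 2 φ x‖)
        hQcont.aestronglyMeasurable ?_
      exact ae_of_all _ fun z => hQbound z
    have hcoordcont : ∀ i : Fin d, Continuous (fun z : EuclideanSpace ℝ (Fin d) => z i) :=
      fun i => (continuous_apply i).comp (PiLp.continuous_ofLp 2 _)
    have hIntzz : ∀ i j : Fin d, Integrable (fun z : EuclideanSpace ℝ (Fin d) => z i * z j) μr := by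
      intro i j
      refine Integrable.mono' hInt2 ((hcoordcont i).mul (hcoordcont j)).aestronglyMeasurable
        (ae_of_all _ fun z => ?_)
      rw [Real.norm_eq_abs, abs_mul]
      calc |z i| * |z j| ≤ ‖z‖ * ‖z‖ :=
            mul_le_mul (coord_abs_le_norm z i) (coord_abs_le_norm z j) (abs_nonneg _) (norm_nonneg _)
        _ = ‖z‖ ^ 2 := by ring
    have hInt4 : Integrable (fun z : EuclideanSpace ℝ (Fin d) => ‖z‖ ^ 4) μr := by
      refine Integrable.mono' hInt2 ((continuous_norm.pow 4)).aestronglyMeasurable ?_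
      refine haebound _ fun z hz => ?_
      rw [Real.norm_of_nonneg (by positivity)]
      exact pow_le_pow_of_le_one (norm_nonneg z) (hball1 z hz) (by norm_num)
    -- symmetry
    have hmap : (∫ z in B, (φ (x + z) - φ x - fderiv ℝ φ x z) ∂ν)
        = ∫ z in B, (φ (x + -z) - φ x - fderiv ℝ φ x (-z)) ∂ν := by
      conv_lhs => rw [← hsymm]
      rw [Measure.restrict_map measurable_neg measurableSet_ball]
      have hpre : (fun z : EuclideanSpace ℝ (Fin d) => -z) ⁻¹' (ball 0 r) = ball 0 r := by
        ext w; simp [mem_ball_zero_iff]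
      rw [hB, hpre]
      rw [integral_map measurable_neg.aemeasurable hfcont.aestronglyMeasurable]
    -- the trace identity
    set F2 := iteratedFDeriv ℝ 2 φ x with hF2
    set A : Matrix (Fin d) (Fin d) ℝ := Matrix.of fun i j : Fin d =>
      F2 ![EuclideanSpace.single i (1 : ℝ), EuclideanSpace.single j (1 : ℝ)] with hA
    have hcov' : ∀ i j : Fin d, (σr * σr.transpose) i j
        = (1/2) * ∫ z in B, (z i * z j) ∂ν := by
      intro i j
      rw [hcov i j]
      norm_num
      rfl
    have hexp : ∀ z : EuclideanSpace ℝ (Fin d),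
        (∑ i, ∑ j, (A j i * (z i * z j))) = F2 (fun _ => z) := by
      intro z
      rw [hF2, bilin_expand]
      rw [Finset.sum_comm]
      refine Finset.sum_congr rfl fun i _ => Finset.sum_congr rfl fun j _ => ?_
      rw [hA]
      simp only [Matrix.of_apply]
      ring
    have htrace : Matrix.trace (σr.transpose * A * σr) = (1/2) *
        ∫ z in B, F2 (fun _ => z) ∂ν := by
      have h1 : Matrix.trace (σr.transpose * A * σr)
          = Matrix.trace ((σr * σr.transpose) * A) := by
        rw [Matrix.trace_mul_comm, ← Matrix.mul_assoc]
      rw [h1]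
      have h2 : Matrix.trace ((σr * σr.transpose) * A)
          = ∑ i, ∑ j, (σr * σr.transpose) i j * A j i := by
        simp [Matrix.trace, Matrix.diag, Matrix.mul_apply]
      rw [h2]
      have h3 : ∀ i j : Fin d, (σr * σr.transpose) i j * A j i
          = (1/2) * ∫ z in B, (A j i * (z i * z j)) ∂ν := by
        intro i j
        rw [hcov' i j, integral_const_mul]
        ring
      simp_rw [h3, ← Finset.mul_sum]
      congr 1
      have h4 : ∀ i : Fin d, (∑ j, ∫ z in B, (A j i * (z i * z j)) ∂ν)
          = ∫ z in B, (∑ j, A j i * (z i * z j)) ∂ν := by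
        intro i
        exact (integral_finset_sum _ fun j _ => (hIntzz i j).const_mul _).symm
      simp_rw [h4]
      rw [← integral_finset_sum _ fun i _ =>
        integrable_finset_sum _ fun j _ => (hIntzz i j).const_mul _]
      apply integral_congr_ae
      exact ae_of_all _ fun z => hexp z
    -- the L^4 bound
    have hcompare : ∫⁻ z in B, ENNReal.ofReal (‖z‖ ^ 4) ∂ν
        ≤ ∫⁻ z in B, ENNReal.ofReal (‖z‖ ^ 4)
            * ENNReal.ofReal (C / ‖z‖ ^ ((d : ℝ) + σ)) ∂volume := by
      set g : EuclideanSpace ℝ (Fin d) → ℝ≥0∞ :=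
        fun z => ENNReal.ofReal (C / ‖z‖ ^ ((d : ℝ) + σ)) with hg
      have hgmeas : Measurable g :=
        (measurable_const.div (measurable_norm.pow_const _)).ennreal_ofReal
      have hle : ν.restrict B ≤ (volume.withDensity g).restrict B := by
        refine Measure.le_iff.2 fun S hS => ?_
        rw [Measure.restrict_apply hS, Measure.restrict_apply hS]
        calc ν (S ∩ B) ≤ ∫⁻ z in S ∩ B, ENNReal.ofReal (C / ‖z‖ ^ ((d : ℝ) + σ)) ∂volume :=
              hdens _ (hS.inter measurableSet_ball)
                ((inter_subset_right).trans (ball_subset_ball hr1.le))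
          _ = (volume.withDensity g) (S ∩ B) :=
              (withDensity_apply g (hS.inter measurableSet_ball)).symm
      calc ∫⁻ z in B, ENNReal.ofReal (‖z‖ ^ 4) ∂ν
          ≤ ∫⁻ z in B, ENNReal.ofReal (‖z‖ ^ 4) ∂(volume.withDensity g) :=
            lintegral_mono' hle le_rfl
        _ = ∫⁻ z in B, g z * ENNReal.ofReal (‖z‖ ^ 4) ∂volume := by
            rw [hB, restrict_withDensity measurableSet_ball,
              lintegral_withDensity_eq_lintegral_mul _ hgmeas
                ((measurable_norm.pow_const 4).ennreal_ofReal)]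
            rfl
        _ = ∫⁻ z in B, ENNReal.ofReal (‖z‖ ^ 4) * g z ∂volume := by
            apply lintegral_congr
            intro z
            rw [mul_comm]
    have hBls : ∫⁻ z in B, ENNReal.ofReal (‖z‖ ^ 4) ∂ν
        ≤ ENNReal.ofReal (c₀ * r ^ (4 - σ)) := by
      refine hcompare.trans ?_
      rw [hB, hc₀]
      exact radial_bound hd C σ hC hσ1 hσ2 hr0 hr1
    have hB4 : (∫ z in B, ‖z‖ ^ 4 ∂ν) ≤ c₀ * r ^ (4 - σ) := by
      rw [integral_eq_lintegral_of_nonneg_ae (f := fun z : EuclideanSpace ℝ (Fin d) => ‖z‖ ^ 4) (ae_of_all _ fun z => (by positivity : (0:ℝ) ≤ ‖z‖ ^ 4))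
        ((continuous_norm.pow 4)).aestronglyMeasurable]
      exact ENNReal.toReal_le_of_le_ofReal (by positivity) hBls
    -- put everything together
    set I := ∫ z in B, (φ (x + z) - φ x - fderiv ℝ φ x z) ∂ν with hI
    set Tq := ∫ z in B, F2 (fun _ => z) ∂ν with hTq
    have hsum : I - (1/2) * Tq = (1/2) * ∫ z in B,
        ((φ (x + z) - φ x - fderiv ℝ φ x z) + (φ (x + -z) - φ x - fderiv ℝ φ x (-z))
          - F2 (fun _ => z)) ∂ν := by
      have hIntsum : Integrable (fun z : EuclideanSpace ℝ (Fin d) =>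
          (φ (x + z) - φ x - fderiv ℝ φ x z) + (φ (x + -z) - φ x - fderiv ℝ φ x (-z))) μr :=
        hIntf.add hIntfneg
      rw [integral_sub hIntsum hIntQ, integral_add hIntf hIntfneg]
      rw [hI, hTq, ← hmap]
      ring
    have hptwise : ∀ z : EuclideanSpace ℝ (Fin d),
        |(φ (x + z) - φ x - fderiv ℝ φ x z) + (φ (x + -z) - φ x - fderiv ℝ φ x (-z))
          - F2 (fun _ => z)| ≤ M4 / 3 * ‖z‖ ^ 4 := by
      intro z
      have := key_taylor hφ hM4 x z
      rw [hF2]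
      have heq : (φ (x + z) - φ x - fderiv ℝ φ x z) + (φ (x + -z) - φ x - fderiv ℝ φ x (-z))
          - iteratedFDeriv ℝ 2 φ x (fun _ => z)
          = φ (x + z) + φ (x - z) - 2 * φ x - iteratedFDeriv ℝ 2 φ x (fun _ => z) := by
        rw [map_neg, show x + -z = x - z from (sub_eq_add_neg x z).symm]
        ring
      rw [heq]
      exact this
    have hintbound : |∫ z in B,
        ((φ (x + z) - φ x - fderiv ℝ φ x z) + (φ (x + -z) - φ x - fderiv ℝ φ x (-z))
          - F2 (fun _ => z)) ∂ν| ≤ M4 / 3 * (c₀ * r ^ (4 - σ)) := by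
      rw [← Real.norm_eq_abs]
      refine (norm_integral_le_of_norm_le (hInt4.const_mul (M4 / 3))
        (ae_of_all _ fun z => ?_)).trans ?_
      · rw [Real.norm_eq_abs]; exact hptwise z
      · rw [integral_const_mul]
        exact mul_le_mul_of_nonneg_left hB4 (by positivity)
    rw [htrace]
    calc |I - 1/2 * Tq| = (1/2) * |∫ z in B,
          ((φ (x + z) - φ x - fderiv ℝ φ x z) + (φ (x + -z) - φ x - fderiv ℝ φ x (-z))
            - F2 (fun _ => z)) ∂ν| := by
          rw [hsum, abs_mul]
          norm_num
      _ ≤ (1/2) * (M4 / 3 * (c₀ * r ^ (4 - σ))) := by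
          exact mul_le_mul_of_nonneg_left hintbound (by norm_num)
      _ ≤ (c₀ / 6 + 1) * r ^ (4 - σ) * M4 := by
          have hrp : 0 ≤ r ^ (4 - σ) := (Real.rpow_pos_of_pos hr0 _).le
          nlinarith [mul_nonneg (mul_nonneg hc₀0 hrp) hM40, mul_nonneg hrp hM40]
end

section
/- Let d = 1, ρ > 0, β_i the hat basis functions on the grid x_i = iρ, and let (Φ_j)_{j∈ℤ} ⊂ ℝ satisfy |Φ_j − Φ_i| ≥ √(1 − c₀h) ρ |j−i| for all i, j, with c₀h < 1 small enough that √(1−c₀h) > 2/3. Then for every i ∈ ℤ, ∑_{j∈ℤ} β_i(Φ_j) ≤ 1 + K₀ h, where K₀ depends only on c₀ (one may take 3 − 2√(1−c₀h) ≤ 1 + K₀h). -/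
/-- If the points Φ_j are separated, |Φ_j − Φ_i| ≥ √(1−c₀h) ρ |j−i|, with
√(1−c₀h) > 2/3, then for every i the sum of the hat function β_i(x) = max(0, 1 − |x − iρ|/ρ)
over the points Φ_j is at most 1 + K₀h, where K₀ > 0 depends only on c₀. -/
theorem stmt8 (c₀ : ℝ) (hc : 0 < c₀) :
    ∃ K₀ : ℝ, 0 < K₀ ∧
    ∀ ρ h : ℝ, 0 < ρ → 0 < h → c₀ * h < 1 → 2 / 3 < Real.sqrt (1 - c₀ * h) →
    ∀ Φ : ℤ → ℝ,
    (∀ i j : ℤ, Real.sqrt (1 - c₀ * h) * ρ * |(j : ℝ) - (i : ℝ)| ≤ |Φ j - Φ i|) →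
    ∀ i : ℤ, ∑' j : ℤ, max 0 (1 - |Φ j - (i : ℝ) * ρ| / ρ) ≤ 1 + K₀ * h := by
  refine ⟨2 * c₀, by positivity, ?_⟩
  intro ρ h hρ hh h1 hs Φ hsep i
  set s : ℝ := Real.sqrt (1 - c₀ * h) with hs_def
  set c : ℝ := (i : ℝ) * ρ with hc_def
  set f : ℤ → ℝ := fun j => max 0 (1 - |Φ j - c| / ρ) with hf_def
  have hch : 0 < c₀ * h := by positivity
  have hs0 : 0 < s := lt_trans (by norm_num) hs
  have hs1 : s ≤ 1 := Real.sqrt_le_one.mpr (by linarith)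
  have hkey : 1 - c₀ * h ≤ s := by
    have hnn : (0:ℝ) ≤ 1 - c₀ * h := by linarith
    have := Real.sq_sqrt hnn
    nlinarith [Real.sqrt_nonneg (1 - c₀ * h)]
  -- basic facts about f
  have hf0 : ∀ j, 0 ≤ f j := fun j => le_max_left _ _
  have hf1 : ∀ j, f j ≤ 1 := by
    intro j
    have : 0 ≤ |Φ j - c| / ρ := by positivity
    exact max_le (by norm_num) (by linarith)
  have hfval : ∀ j, f j ≠ 0 → f j = 1 - |Φ j - c| / ρ ∧ |Φ j - c| < ρ := by
    intro j hj
    rcases le_or_gt (1 - |Φ j - c| / ρ) 0 with hle | hlt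
    · exact absurd (max_eq_left hle) hj
    · refine ⟨max_eq_right hlt.le, ?_⟩
      have : |Φ j - c| / ρ < 1 := by linarith
      calc |Φ j - c| = |Φ j - c| / ρ * ρ := by field_simp
        _ < 1 * ρ := by exact mul_lt_mul_of_pos_right this hρ
        _ = ρ := by ring
  -- diameter of support
  have hdiam : ∀ j j' : ℤ, f j ≠ 0 → f j' ≠ 0 → -2 ≤ j - j' ∧ j - j' ≤ 2 := by
    intro j j' hj hj'
    obtain ⟨-, hd⟩ := hfval j hj
    obtain ⟨-, hd'⟩ := hfval j' hj'
    have htri : |Φ j - Φ j'| ≤ |Φ j - c| + |Φ j' - c| := by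
      calc |Φ j - Φ j'| ≤ |Φ j - c| + |c - Φ j'| := abs_sub_le _ _ _
        _ = |Φ j - c| + |Φ j' - c| := by rw [abs_sub_comm c]
    have hsep' := hsep j' j
    have hA : s * ρ * |(j : ℝ) - (j' : ℝ)| < 2 * ρ := by linarith
    have hA2 : |(j : ℝ) - (j' : ℝ)| < 3 := by
      by_contra hA2
      push_neg at hA2
      have h3 : s * ρ * 3 ≤ s * ρ * |(j : ℝ) - (j' : ℝ)| :=
        mul_le_mul_of_nonneg_left hA2 (by positivity)
      nlinarith [mul_pos (show (0:ℝ) < s - 2/3 by linarith) hρ]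
    have hcast : |((j - j' : ℤ) : ℝ)| < 3 := by push_cast; exact hA2
    rw [← Int.cast_abs] at hcast
    have : |j - j'| < 3 := by exact_mod_cast hcast
    rw [abs_lt] at this
    omega
  -- pairwise bound
  have hpair : ∀ j j' : ℤ, f j ≠ 0 → f j' ≠ 0 →
      f j + f j' ≤ 2 - s * |(j : ℝ) - (j' : ℝ)| := by
    intro j j' hj hj'
    obtain ⟨hv, -⟩ := hfval j hj
    obtain ⟨hv', -⟩ := hfval j' hj'
    have htri : |Φ j - Φ j'| ≤ |Φ j - c| + |Φ j' - c| := by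
      calc |Φ j - Φ j'| ≤ |Φ j - c| + |c - Φ j'| := abs_sub_le _ _ _
        _ = |Φ j - c| + |Φ j' - c| := by rw [abs_sub_comm c]
    have hsep' := hsep j' j
    have h2 : s * |(j : ℝ) - (j' : ℝ)| ≤ (|Φ j - c| + |Φ j' - c|) / ρ := by
      rw [le_div_iff₀ hρ]; nlinarith
    rw [add_div] at h2
    rw [hv, hv']
    linarith
  -- window lemma
  have hwin : ∀ a : ℤ, (∀ j, f j ≠ 0 → a ≤ j ∧ j ≤ a + 2) →
      ∑' j : ℤ, f j ≤ 1 + 2 * c₀ * h := by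
    intro a ha
    have hset : Finset.Icc a (a + 2) = {a, a + 1, a + 2} := by
      ext j; simp [Finset.mem_Icc, Finset.mem_insert]; omega
    have hsum : ∑' j : ℤ, f j = ∑ j ∈ Finset.Icc a (a + 2), f j := by
      refine tsum_eq_sum ?_
      intro b hb
      by_contra hfb
      have := ha b hfb
      simp [Finset.mem_Icc] at hb
      omega
    have hsum3 : ∑ j ∈ Finset.Icc a (a + 2), f j = f a + f (a + 1) + f (a + 2) := by
      rw [hset]
      rw [Finset.sum_insert (by simp), Finset.sum_insert (by simp),
        Finset.sum_singleton]
      ring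
    rw [hsum, hsum3]
    have e02 : |((a : ℤ) : ℝ) - ((a + 2 : ℤ) : ℝ)| = 2 := by
      push_cast
      rw [show (a : ℝ) - ((a : ℝ) + 2) = -2 by ring]
      norm_num
    have e01 : |((a : ℤ) : ℝ) - ((a + 1 : ℤ) : ℝ)| = 1 := by
      push_cast
      rw [show (a : ℝ) - ((a : ℝ) + 1) = -1 by ring]
      norm_num
    have e12 : |((a + 1 : ℤ) : ℝ) - ((a + 2 : ℤ) : ℝ)| = 1 := by
      push_cast
      rw [show (a : ℝ) + 1 - ((a : ℝ) + 2) = -1 by ring]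
      norm_num
    rcases eq_or_ne (f a) 0 with h0 | h0 <;>
      rcases eq_or_ne (f (a + 1)) 0 with h1' | h1' <;>
      rcases eq_or_ne (f (a + 2)) 0 with h2' | h2'
    · rw [h0, h1', h2']; linarith
    · rw [h0, h1']; linarith [hf1 (a + 2)]
    · rw [h0, h2']; linarith [hf1 (a + 1)]
    · have := hpair (a + 1) (a + 2) h1' h2'
      rw [e12] at this
      rw [h0]; linarith
    · rw [h1', h2']; linarith [hf1 a]
    · have := hpair a (a + 2) h0 h2'
      rw [e02] at this
      rw [h1']; linarith
    · have := hpair a (a + 1) h0 h1'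
      rw [e01] at this
      rw [h2']; linarith
    · have hp := hpair a (a + 2) h0 h2'
      rw [e02] at hp
      linarith [hf1 (a + 1)]
  -- main case analysis
  show ∑' j : ℤ, f j ≤ 1 + 2 * c₀ * h
  by_cases hall : ∀ j, f j = 0
  · have : ∑' j : ℤ, f j = ∑ j ∈ (∅ : Finset ℤ), f j :=
      tsum_eq_sum (fun b _ => hall b)
    rw [this, Finset.sum_empty]
    linarith
  · push_neg at hall
    obtain ⟨j₀, hj₀⟩ := hall
    by_cases hm : f (j₀ - 2) = 0
    · by_cases hp : f (j₀ + 2) = 0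
      · refine hwin (j₀ - 1) ?_
        intro j hj
        have h₁ := hdiam j j₀ hj hj₀
        have h₂ : j ≠ j₀ - 2 := by rintro rfl; exact hj hm
        have h₃ : j ≠ j₀ + 2 := by rintro rfl; exact hj hp
        omega
      · refine hwin j₀ ?_
        intro j hj
        have h₁ := hdiam j j₀ hj hj₀
        have h₂ := hdiam j (j₀ + 2) hj hp
        omega
    · refine hwin (j₀ - 2) ?_
      intro j hj
      have h₁ := hdiam j j₀ hj hj₀
      have h₂ := hdiam j (j₀ - 2) hj hm
      omega
end

section
/- Let H: ℝ×ℝ → ℝ be such that D_p H ∈ C¹ with |D_{pp}H(x,p)| + |D_{px}H(x,p)| ≤ C_R for |p| ≤ R, H convex in p, and let v: ℝ → ℝ be Lipschitz with constant ≤ R and satisfy the one-sided gradient bound (Dv(x_j) − Dv(x_i))(x_j − x_i) ≤ c₂|x_j − x_i|². Then (D_pH(x_j, Dv(x_j)) − D_pH(x_i, Dv(x_i)))(x_j − x_i) ≤ c₀|x_j − x_i|² with c₀ = C_R c₂ + C_R. -/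
open Set

/-- A convex function on `ℝ` has a differentiability point in any open interval. -/
lemma exists_diff_pt_of_convexOn (φ : ℝ → ℝ) (hφ : ConvexOn ℝ Set.univ φ)
    {u w : ℝ} (huw : u < w) :
    ∃ x, x ∈ Set.Ioo u w ∧ DifferentiableAt ℝ φ x := by
  have hloc : LocallyLipschitz φ :=
    locallyLipschitzOn_univ.1 (hφ.locallyLipschitzOn isOpen_univ)
  set m := (u + w) / 2 with hm_def
  have hm : m ∈ Set.Ioo u w := ⟨by simp only [hm_def]; linarith, by simp only [hm_def]; linarith⟩
  obtain ⟨K, t, ht, hK⟩ := hloc m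
  have hmem : t ∩ Set.Ioo u w ∈ nhds m := Filter.inter_mem ht (isOpen_Ioo.mem_nhds hm)
  obtain ⟨ε, hε, hball⟩ := Metric.mem_nhds_iff.1 hmem
  set B := Metric.ball m ε with hB_def
  have hlip : LipschitzOnWith K φ B := hK.mono fun x hx => (hball hx).1
  have hae := hlip.ae_differentiableWithinAt_of_mem_of_real
    (μ := MeasureTheory.volume)
  have hBne : MeasureTheory.volume B ≠ 0 :=
    (Metric.measure_ball_pos MeasureTheory.volume m hε).ne'
  obtain ⟨x, hxB, hx⟩ := MeasureTheory.Measure.exists_mem_of_measure_ne_zero_of_ae hBne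
    (MeasureTheory.ae_restrict_of_ae hae)
  refine ⟨x, (hball hxB).2, ?_⟩
  exact (hx hxB).differentiableAt (Metric.isOpen_ball.mem_nhds hxB)

/-- If `φ` is convex on `ℝ` and its (everywhere-defined, possibly junk) derivative
is continuous, then its derivative is monotone. -/
lemma monotone_deriv_of_convexOn (φ : ℝ → ℝ) (hφ : ConvexOn ℝ Set.univ φ)
    (hg : Continuous (deriv φ)) : Monotone (deriv φ) := by
  have key : ∀ x y : ℝ, x < y → DifferentiableAt ℝ φ x → DifferentiableAt ℝ φ y →
      deriv φ x ≤ deriv φ y := fun x y hxy hx hy =>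
    (hφ.deriv_le_slope (Set.mem_univ x) (Set.mem_univ y) hxy hx).trans
      (hφ.slope_le_deriv (Set.mem_univ x) (Set.mem_univ y) hxy hy)
  intro p q hpq
  rcases eq_or_lt_of_le hpq with rfl | hlt
  · exact le_rfl
  refine le_of_forall_pos_le_add fun ε hε => ?_
  obtain ⟨δ₁, hδ₁, h₁⟩ := Metric.continuousAt_iff.1 (hg.continuousAt (x := p)) (ε / 2)
    (by linarith)
  obtain ⟨δ₂, hδ₂, h₂⟩ := Metric.continuousAt_iff.1 (hg.continuousAt (x := q)) (ε / 2)
    (by linarith)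
  have hd : (0 : ℝ) < (q - p) / 2 := by linarith
  obtain ⟨x, hxI, hxd⟩ := exists_diff_pt_of_convexOn φ hφ
    (show p < p + min δ₁ ((q - p) / 2) by
      have := lt_min hδ₁ hd; linarith)
  obtain ⟨y, hyI, hyd⟩ := exists_diff_pt_of_convexOn φ hφ
    (show q - min δ₂ ((q - p) / 2) < q by
      have := lt_min hδ₂ hd; linarith)
  have hxy : x < y := by
    have h1 := hxI.2
    have h2 := hyI.1
    have h3 : min δ₁ ((q - p) / 2) ≤ (q - p) / 2 := min_le_right _ _
    have h4 : min δ₂ ((q - p) / 2) ≤ (q - p) / 2 := min_le_right _ _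
    linarith
  have hxp : dist x p < δ₁ := by
    rw [Real.dist_eq, abs_lt]
    constructor
    · linarith [hxI.1]
    · have := hxI.2; have h3 : min δ₁ ((q - p) / 2) ≤ δ₁ := min_le_left _ _; linarith
  have hyq : dist y q < δ₂ := by
    rw [Real.dist_eq, abs_lt]
    constructor
    · have := hyI.1; have h4 : min δ₂ ((q - p) / 2) ≤ δ₂ := min_le_left _ _; linarith
    · linarith [hyI.2]
  have e1 : |deriv φ x - deriv φ p| < ε / 2 := by
    have := h₁ hxp; rwa [Real.dist_eq] at this
  have e2 : |deriv φ y - deriv φ q| < ε / 2 := by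
    have := h₂ hyq; rwa [Real.dist_eq] at this
  have hxy' := key x y hxy hxd hyd
  have a1 := abs_lt.1 e1
  have a2 := abs_lt.1 e2
  linarith [a1.1, a1.2, a2.1, a2.2]

/-- d = 1: One-sided Lipschitz bound for the composite drift
x ↦ D_pH(x, Dv(x)). If D_pH ∈ C¹ with |D_{pp}H| + |D_{px}H| ≤ C_R for |p| ≤ R, H is convex
in p, v is Lipschitz with constant ≤ R and satisfies the one-sided gradient bound
(Dv(b) − Dv(a))(b − a) ≤ c₂(b − a)², then
(D_pH(b, Dv(b)) − D_pH(a, Dv(a)))(b − a) ≤ c₀(b − a)² with c₀ = C_R c₂ + C_R. -/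
theorem stmt16 (H : ℝ → ℝ → ℝ) (R CR c₂ : ℝ) (hR : 0 < R) (hCR : 0 ≤ CR) (hc₂ : 0 ≤ c₂)
    (hHp_C1 : ContDiff ℝ 1 (fun q : ℝ × ℝ => deriv (H q.1) q.2))
    (hbound : ∀ x p : ℝ, |p| ≤ R →
      |deriv (fun p' => deriv (H x) p') p| + |deriv (fun x' => deriv (H x') p) x| ≤ CR)
    (hconv : ∀ x : ℝ, ConvexOn ℝ Set.univ (H x))
    (v : ℝ → ℝ) (hv_diff : Differentiable ℝ v)
    (hv_lip : LipschitzWith (Real.toNNReal R) v)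
    (hv_osl : ∀ a b : ℝ, (deriv v b - deriv v a) * (b - a) ≤ c₂ * (b - a) ^ 2) :
    ∀ a b : ℝ,
      (deriv (H b) (deriv v b) - deriv (H a) (deriv v a)) * (b - a)
        ≤ (CR * c₂ + CR) * (b - a) ^ 2 := by
  intro a b
  -- derivative of v is bounded by R
  have hvd : ∀ x : ℝ, |deriv v x| ≤ R := by
    intro x
    have := (hv_diff x).hasDerivAt.le_of_lipschitz hv_lip
    rwa [Real.norm_eq_abs, Real.coe_toNNReal R hR.le] at this
  set qa := deriv v a with hqa_def
  set qb := deriv v b with hqb_def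
  have hqa : |qa| ≤ R := hvd a
  have hqb : |qb| ≤ R := hvd b
  -- differentiability of the slices of G(x,p) = deriv (H x) p
  have hG : Differentiable ℝ (fun q : ℝ × ℝ => deriv (H q.1) q.2) :=
    hHp_C1.differentiable one_ne_zero
  have hGx : ∀ p : ℝ, Differentiable ℝ (fun x => deriv (H x) p) := fun p =>
    hG.comp (differentiable_id.prodMk (differentiable_const p))
  have hGp : ∀ x : ℝ, Differentiable ℝ (fun p => deriv (H x) p) := fun x =>
    hG.comp ((differentiable_const x).prodMk differentiable_id)
  have hContp : ∀ x : ℝ, Continuous (fun p => deriv (H x) p) := fun x => (hGp x).continuous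
  -- split the bound
  have hpp : ∀ x p : ℝ, |p| ≤ R → |deriv (fun p' => deriv (H x) p') p| ≤ CR := fun x p hp =>
    le_trans (le_add_of_nonneg_right (abs_nonneg _)) (hbound x p hp)
  have hpx : ∀ x p : ℝ, |p| ≤ R → |deriv (fun x' => deriv (H x') p) x| ≤ CR := fun x p hp =>
    le_trans (le_add_of_nonneg_left (abs_nonneg _)) (hbound x p hp)
  -- Term 2 : x-regularity
  have term2 : |deriv (H b) qa - deriv (H a) qa| ≤ CR * |b - a| := by
    have := convex_univ.norm_image_sub_le_of_norm_deriv_le (𝕜 := ℝ)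
      (f := fun x => deriv (H x) qa) (C := CR)
      (fun x _ => (hGx qa) x)
      (fun x _ => by rw [Real.norm_eq_abs]; exact hpx x qa hqa)
      (Set.mem_univ a) (Set.mem_univ b)
    simpa [Real.norm_eq_abs] using this
  -- Term 1 Lipschitz part: p-regularity on [-R, R]
  have hIcc : qa ∈ Set.Icc (-R) R := by
    have := abs_le.1 hqa; exact ⟨this.1, this.2⟩
  have hIcc' : qb ∈ Set.Icc (-R) R := by
    have := abs_le.1 hqb; exact ⟨this.1, this.2⟩
  have term1lip : |deriv (H b) qb - deriv (H b) qa| ≤ CR * |qb - qa| := by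
    have := (convex_Icc (-R) R).norm_image_sub_le_of_norm_deriv_le (𝕜 := ℝ)
      (f := fun p => deriv (H b) p) (C := CR)
      (fun p _ => (hGp b) p)
      (fun p hp => by
        rw [Real.norm_eq_abs]
        exact hpp b p (abs_le.2 ⟨hp.1, hp.2⟩))
      hIcc hIcc'
    simpa [Real.norm_eq_abs] using this
  -- monotonicity of p ↦ deriv (H b) p
  have hmono : Monotone (deriv (H b)) :=
    monotone_deriv_of_convexOn (H b) (hconv b) (hContp b)
  set t := b - a with ht_def
  -- bound on term 2 times t
  have h2 : (deriv (H b) qa - deriv (H a) qa) * t ≤ CR * t ^ 2 := by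
    calc (deriv (H b) qa - deriv (H a) qa) * t
        ≤ |deriv (H b) qa - deriv (H a) qa| * |t| := by
          calc (deriv (H b) qa - deriv (H a) qa) * t ≤ |(deriv (H b) qa - deriv (H a) qa) * t| :=
                le_abs_self _
            _ = |deriv (H b) qa - deriv (H a) qa| * |t| := abs_mul _ _
      _ ≤ (CR * |t|) * |t| := by
          apply mul_le_mul_of_nonneg_right _ (abs_nonneg t)
          simpa [ht_def] using term2
      _ = CR * t ^ 2 := by rw [mul_assoc, ← abs_mul, ← sq, abs_of_nonneg (sq_nonneg t)]
  -- bound on term 1 times t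
  have h1 : (deriv (H b) qb - deriv (H b) qa) * t ≤ CR * c₂ * t ^ 2 := by
    rcases le_or_gt ((qb - qa) * t) 0 with hneg | hpos
    · have hle : (deriv (H b) qb - deriv (H b) qa) * t ≤ 0 := by
        rcases lt_trichotomy qa qb with hq | hq | hq
        · have ht : t ≤ 0 := by
            by_contra h
            push_neg at h
            nlinarith
          exact mul_nonpos_of_nonneg_of_nonpos (by linarith [hmono hq.le]) ht
        · rw [hq]; simp
        · have ht : 0 ≤ t := by
            by_contra h
            push_neg at h
            nlinarith
          exact mul_nonpos_of_nonpos_of_nonneg (by linarith [hmono hq.le]) ht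
      calc (deriv (H b) qb - deriv (H b) qa) * t ≤ 0 := hle
        _ ≤ CR * c₂ * t ^ 2 := by positivity
    · calc (deriv (H b) qb - deriv (H b) qa) * t
          ≤ |deriv (H b) qb - deriv (H b) qa| * |t| := by
            calc (deriv (H b) qb - deriv (H b) qa) * t
                ≤ |(deriv (H b) qb - deriv (H b) qa) * t| := le_abs_self _
              _ = |deriv (H b) qb - deriv (H b) qa| * |t| := abs_mul _ _
        _ ≤ (CR * |qb - qa|) * |t| := mul_le_mul_of_nonneg_right term1lip (abs_nonneg t)
        _ = CR * ((qb - qa) * t) := by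
            rw [mul_assoc, ← abs_mul, abs_of_pos hpos]
        _ ≤ CR * (c₂ * t ^ 2) := by
            apply mul_le_mul_of_nonneg_left _ hCR
            simpa [hqa_def, hqb_def, ht_def] using hv_osl a b
        _ = CR * c₂ * t ^ 2 := by ring
  have hsplit : (deriv (H b) qb - deriv (H a) qa) * t
      = (deriv (H b) qb - deriv (H b) qa) * t + (deriv (H b) qa - deriv (H a) qa) * t := by
    ring
  calc (deriv (H b) qb - deriv (H a) qa) * t
      = (deriv (H b) qb - deriv (H b) qa) * t + (deriv (H b) qa - deriv (H a) qa) * t := hsplit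
    _ ≤ CR * c₂ * t ^ 2 + CR * t ^ 2 := add_le_add h1 h2
    _ = (CR * c₂ + CR) * t ^ 2 := by ring
end
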